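/- arXiv:2306.11215 — 6 statements merged into one kernel-verified Lean document; each statement's English description precedes it below -/
import Mathlib

section
/- Let z be a complex number with z ≠ 1 and z ≠ −1. If |Log((1 + z)/(1 − z))| < 1, where Log denotes the principal complex logarithm, then |z| < tan(1/2). -/
open Real

-- sinh x ≤ x * cosh x for 0 ≤ x
lemma sinh_le_mul_cosh {x : ℝ} (hx : 0 ≤ x) : Real.sinh x ≤ x * Real.cosh x := by
  have hmono : MonotoneOn (fun t : ℝ => t * Real.cosh t - Real.sinh t) (Set.Ici 0) := by
    apply monotoneOn_of_deriv_nonneg (convex_Ici 0)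
    · fun_prop
    · intro t ht
      exact (((hasDerivAt_id t).mul (Real.hasDerivAt_cosh t)).sub
        (Real.hasDerivAt_sinh t)).differentiableAt.differentiableWithinAt
    · intro t ht
      simp only [interior_Ici, Set.mem_Ioi] at ht
      have hd : HasDerivAt (fun t : ℝ => t * Real.cosh t - Real.sinh t)
          (1 * Real.cosh t + t * Real.sinh t - Real.cosh t) t :=
        (((hasDerivAt_id t).mul (Real.hasDerivAt_cosh t)).sub (Real.hasDerivAt_sinh t))
      rw [hd.deriv]
      have : 0 ≤ Real.sinh t := Real.sinh_nonneg_iff.2 ht.le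
      nlinarith
  have h0 := hmono (Set.self_mem_Ici) (Set.mem_Ici.2 hx) hx
  simp at h0
  linarith


lemma cos_one_lt : Real.cos 1 ≤ 0.5427 := by
  have hb := Real.cos_bound (x := 1/2) (by rw [abs_of_nonneg] <;> norm_num)
  rw [show |(1/2:ℝ)| = 1/2 by norm_num] at hb
  have h2 := (abs_le.1 hb).2
  have h1 : Real.cos (1/2) ≤ 1349/1536 := by nlinarith
  have h0 : 0 ≤ Real.cos (1/2) := Real.cos_nonneg_of_mem_Icc
    (by constructor <;> nlinarith [Real.pi_gt_three])
  have h3 : Real.cos 1 = 2 * Real.cos (1/2) ^ 2 - 1 := by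
    rw [← Real.cos_two_mul]; norm_num
  nlinarith

lemma cosh_half_sq : Real.cosh (1/2) ^ 2 ≤ 1.27155 := by
  have he1 : Real.exp 1 < 2.7182818286 := Real.exp_one_lt_d9
  have he2 : (2.7182818283 : ℝ) < Real.exp 1 := Real.exp_one_gt_d9
  have he3 : Real.exp (-1) ≤ 0.367879442 := by
    rw [Real.exp_neg]
    rw [inv_le_comm₀ (Real.exp_pos 1) (by norm_num)]
    calc (0.367879442:ℝ)⁻¹ ≤ 2.7182818283 := by norm_num
      _ ≤ Real.exp 1 := he2.le
  have hc1 : Real.cosh 1 ≤ 1.54308064 := by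
    rw [Real.cosh_eq]; linarith
  have h2 : Real.cosh 1 = 2 * Real.cosh (1/2) ^ 2 - 1 := by
    have ht := Real.cosh_two_mul (1/2)
    norm_num at ht
    nlinarith [Real.cosh_sq_sub_sinh_sq (1/2 : ℝ)]
  nlinarith


lemma sin_sin_ge {a b : ℝ} (ha0 : 0 < a) (ha1 : a ≤ 1) (hb0 : 0 < b) (hb1 : b ≤ 1)
    (hab : a + b = 1) : (25/32) * (a*b) ≤ Real.sin a * Real.sin b := by
  have hsa : a - a^3/6 - a^4*(5/96) ≤ Real.sin a := by
    have h := (abs_le.1 (Real.sin_bound (x := a) (by rw [abs_of_pos ha0]; exact ha1))).1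
    rw [abs_of_pos ha0] at h
    nlinarith [mul_le_mul_of_nonneg_left ha1 (pow_pos ha0 4).le]
  have hsb : b - b^3/6 - b^4*(5/96) ≤ Real.sin b := by
    have h := (abs_le.1 (Real.sin_bound (x := b) (by rw [abs_of_pos hb0]; exact hb1))).1
    rw [abs_of_pos hb0] at h
    nlinarith [mul_le_mul_of_nonneg_left hb1 (pow_pos hb0 4).le]
  have hcube_a : a^3 ≤ a := by
    nlinarith [mul_nonneg (mul_nonneg ha0.le (by linarith : (0:ℝ) ≤ 1 - a)) (by linarith : (0:ℝ) ≤ 1 + a)]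
  have hcube_b : b^3 ≤ b := by
    nlinarith [mul_nonneg (mul_nonneg hb0.le (by linarith : (0:ℝ) ≤ 1 - b)) (by linarith : (0:ℝ) ≤ 1 + b)]
  have hquart_a : a^4 ≤ a := by
    nlinarith [mul_nonneg (mul_nonneg ha0.le (by linarith : (0:ℝ) ≤ 1 - a)) (by positivity : (0:ℝ) ≤ 1 + a + a^2)]
  have hquart_b : b^4 ≤ b := by
    nlinarith [mul_nonneg (mul_nonneg hb0.le (by linarith : (0:ℝ) ≤ 1 - b)) (by positivity : (0:ℝ) ≤ 1 + b + b^2)]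
  have hla0 : 0 ≤ a - a^3/6 - a^4*(5/96) := by linarith
  have hlb0 : 0 ≤ b - b^3/6 - b^4*(5/96) := by linarith
  have hfac : (a - a^3/6 - a^4*(5/96)) * (b - b^3/6 - b^4*(5/96))
      = (a*b) * ((1 - a^2/6 - a^3*(5/96)) * (1 - b^2/6 - b^3*(5/96))) := by ring
  have hp0 : 0 ≤ a^2/6 + a^3*(5/96) := by positivity
  have hq0 : 0 ≤ b^2/6 + b^3*(5/96) := by positivity
  have hcross : 1 - (a^2/6 + a^3*(5/96)) - (b^2/6 + b^3*(5/96))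
      ≤ (1 - a^2/6 - a^3*(5/96)) * (1 - b^2/6 - b^3*(5/96)) := by
    have hexp : (1 - a^2/6 - a^3*(5/96)) * (1 - b^2/6 - b^3*(5/96))
        = 1 - (a^2/6 + a^3*(5/96)) - (b^2/6 + b^3*(5/96))
          + (a^2/6 + a^3*(5/96)) * (b^2/6 + b^3*(5/96)) := by ring
    rw [hexp]
    linarith [mul_nonneg hp0 hq0]
  have hsum : (25:ℝ)/32 ≤ 1 - (a^2/6 + a^3*(5/96)) - (b^2/6 + b^3*(5/96)) := by
    have hab2 : a^2 + b^2 = 1 - 2*(a*b) := by linear_combination (a+b+1)*hab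
    have hab3 : a^3 + b^3 = 1 - 3*(a*b) := by linear_combination (a^2+2*(a*b)+b^2+a+b+1-3*(a*b))*hab
    have habnn : 0 ≤ a*b := mul_nonneg ha0.le hb0.le
    linarith
  have hC : (25:ℝ)/32 ≤ (1 - a^2/6 - a^3*(5/96)) * (1 - b^2/6 - b^3*(5/96)) :=
    le_trans hsum hcross
  have hlablb : (25/32) * (a*b) ≤ (a - a^3/6 - a^4*(5/96)) * (b - b^3/6 - b^4*(5/96)) := by
    rw [hfac]
    have := mul_le_mul_of_nonneg_left hC (mul_nonneg ha0.le hb0.le)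
    linarith
  exact hlablb.trans (mul_le_mul hsa hsb hlb0 (le_trans hla0 hsa))

lemma key_ineq {x y : ℝ} (hx : 0 ≤ x) (hy : 0 ≤ y) (hxy : x^2 + y^2 < 1/4) :
    (Real.sinh x ^ 2 + Real.sin y ^ 2) * Real.cos (1/2) ^ 2
      < (Real.sinh x ^ 2 + Real.cos y ^ 2) * Real.sin (1/2) ^ 2 := by
  have hx12 : x ≤ 1/2 := by nlinarith
  have hy12 : y < 1/2 := by nlinarith
  have hprod : (25/32) * ((1/2+y)*(1/2-y)) ≤ Real.sin (1/2+y) * Real.sin (1/2-y) :=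
    sin_sin_ge (by linarith) (by linarith) (by linarith) (by linarith) (by ring)
  -- sinh bound
  have hsinh : Real.sinh x ^ 2 ≤ x^2 * Real.cosh (1/2) ^ 2 := by
    have h1 : Real.sinh x ≤ x * Real.cosh x := sinh_le_mul_cosh hx
    have h2 : Real.cosh x ≤ Real.cosh (1/2) := Real.cosh_le_cosh.2 (by
      rw [abs_of_nonneg hx, abs_of_nonneg (by norm_num : (0:ℝ) ≤ 1/2)]; exact hx12)
    have h3 : 0 ≤ Real.sinh x := Real.sinh_nonneg_iff.2 hx
    have h4 : 0 < Real.cosh x := Real.cosh_pos x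
    have h5 : x * Real.cosh x ≤ x * Real.cosh (1/2) := by nlinarith
    nlinarith [mul_nonneg hx h4.le]
  have hab : x^2 < (1/2+y)*(1/2-y) := by nlinarith
  have hmain : Real.cos 1 * Real.sinh x ^ 2 < Real.sin (1/2+y) * Real.sin (1/2-y) := by
    have hcosh2 := cosh_half_sq
    have hcos1 := cos_one_lt
    have hcospos := Real.cos_one_pos
    have hchpos : (0:ℝ) < Real.cosh (1/2) ^ 2 := by positivity
    have hc1 : Real.cos 1 * Real.sinh x ^ 2 ≤ 0.5427 * (x^2 * 1.27155) := by
      have s1 : Real.cos 1 * Real.sinh x ^ 2 ≤ Real.cos 1 * (x^2 * Real.cosh (1/2)^2) :=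
        mul_le_mul_of_nonneg_left hsinh hcospos.le
      have s2 : Real.cos 1 * (x^2 * Real.cosh (1/2)^2) ≤ 0.5427 * (x^2 * Real.cosh (1/2)^2) :=
        mul_le_mul_of_nonneg_right hcos1 (mul_nonneg (sq_nonneg x) hchpos.le)
      have s3 : (0.5427:ℝ) * (x^2 * Real.cosh (1/2)^2) ≤ 0.5427 * (x^2 * 1.27155) := by
        have := mul_le_mul_of_nonneg_left hcosh2 (sq_nonneg x)
        linarith
      linarith
    have hc2 : (0.5427:ℝ) * (x^2 * 1.27155) < (25/32) * ((1/2+y)*(1/2-y)) := by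
      nlinarith [sq_nonneg x, hab]
    linarith
  -- convert to goal
  have hsina : Real.sin (1/2+y) = Real.sin (1/2) * Real.cos y + Real.cos (1/2) * Real.sin y :=
    Real.sin_add _ _
  have hsinb : Real.sin (1/2-y) = Real.sin (1/2) * Real.cos y - Real.cos (1/2) * Real.sin y :=
    Real.sin_sub _ _
  have hcos1' : Real.cos 1 = Real.cos (1/2)^2 - Real.sin (1/2)^2 := by
    rw [← Real.cos_two_mul']; norm_num
  rw [hsina, hsinb, hcos1'] at hmain
  have hid : (Real.sinh x ^2 + Real.sin y^2) * Real.cos (1/2)^2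
      - (Real.sinh x^2 + Real.cos y^2) * Real.sin (1/2)^2
      = (Real.cos (1/2)^2 - Real.sin (1/2)^2) * Real.sinh x^2
      - (Real.sin (1/2)*Real.cos y + Real.cos (1/2)*Real.sin y)
        * (Real.sin (1/2)*Real.cos y - Real.cos (1/2)*Real.sin y) := by ring
  linarith

lemma key_ineq' (x y : ℝ) (hxy : x^2 + y^2 < 1/4) :
    (Real.sinh x ^ 2 + Real.sin y ^ 2) * Real.cos (1/2) ^ 2
      < (Real.sinh x ^ 2 + Real.cos y ^ 2) * Real.sin (1/2) ^ 2 := by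
  have e1 : Real.sinh x ^ 2 = Real.sinh |x| ^ 2 := by
    rw [← Real.abs_sinh, sq_abs]
  have e2 : Real.sin y ^ 2 = Real.sin |y| ^ 2 := by
    rcases abs_cases y with ⟨h, _⟩ | ⟨h, _⟩ <;> rw [h] <;> simp [Real.sin_neg]
  have e3 : Real.cos y ^ 2 = Real.cos |y| ^ 2 := by rw [Real.cos_abs]
  rw [e1, e2, e3]
  exact key_ineq (abs_nonneg x) (abs_nonneg y)
    (by rw [sq_abs, sq_abs]; exact hxy)

theorem abs_lt_tan_half_of_abs_log_lt (z : ℂ) (h1 : z ≠ 1) (h2 : z ≠ -1)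
    (h : ‖Complex.log ((1 + z) / (1 - z))‖ < 1) :
    ‖z‖ < Real.tan (1/2) := by
  have h1z : (1:ℂ) - z ≠ 0 := sub_ne_zero.2 (Ne.symm h1)
  have h1z' : (1:ℂ) + z ≠ 0 := by
    intro hc
    exact h2 (by linear_combination hc)
  have hne : (1 + z) / (1 - z) ≠ 0 := div_ne_zero h1z' h1z
  set w := Complex.log ((1 + z) / (1 - z)) with hwdef
  have hw : Complex.exp w = (1 + z) / (1 - z) := Complex.exp_log hne
  set u := w / 2 with hu
  set x := u.re with hx
  set y := u.im with hy
  have habs : ‖u‖ < 1/2 := by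
    rw [hu, norm_div]
    simp only [Complex.norm_two]
    linarith
  have hxy : x^2 + y^2 < 1/4 := by
    have h1' := Complex.sq_norm u
    rw [Complex.normSq_apply] at h1'
    have h2' : ‖u‖ ^ 2 < (1/2)^2 := by
      nlinarith [norm_nonneg u]
    nlinarith
  have hre : u = (x:ℂ) + (y:ℂ) * Complex.I := (Complex.re_add_im u).symm
  have hsinh_eq : Complex.sinh u
      = ((Real.sinh x * Real.cos y : ℝ) : ℂ) + ((Real.cosh x * Real.sin y : ℝ) : ℂ) * Complex.I := by
    rw [hre, Complex.sinh_add, Complex.sinh_mul_I, Complex.cosh_mul_I]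
    push_cast [← Complex.ofReal_sinh, ← Complex.ofReal_cosh, ← Complex.ofReal_sin,
      ← Complex.ofReal_cos]
    ring
  have hcosh_eq : Complex.cosh u
      = ((Real.cosh x * Real.cos y : ℝ) : ℂ) + ((Real.sinh x * Real.sin y : ℝ) : ℂ) * Complex.I := by
    rw [hre, Complex.cosh_add, Complex.sinh_mul_I, Complex.cosh_mul_I]
    push_cast [← Complex.ofReal_sinh, ← Complex.ofReal_cosh, ← Complex.ofReal_sin,
      ← Complex.ofReal_cos]
    ring
  have hnsinh : Complex.normSq (Complex.sinh u) = Real.sinh x ^ 2 + Real.sin y ^ 2 := by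
    rw [hsinh_eq, Complex.normSq_add_mul_I]
    have hp := Real.sin_sq_add_cos_sq y
    have hc := Real.cosh_sq x
    nlinarith
  have hncosh : Complex.normSq (Complex.cosh u) = Real.sinh x ^ 2 + Real.cos y ^ 2 := by
    rw [hcosh_eq, Complex.normSq_add_mul_I]
    have hp := Real.sin_sq_add_cos_sq y
    have hc := Real.cosh_sq x
    nlinarith
  have hcospos : 0 < Real.cos y := by
    apply Real.cos_pos_of_mem_Ioo
    constructor <;> nlinarith [Real.pi_gt_three]
  have hcoshne : Complex.cosh u ≠ 0 := by
    intro hcon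
    have hc0 := congrArg Complex.normSq hcon
    rw [hncosh] at hc0
    simp only [map_zero] at hc0
    nlinarith [sq_nonneg (Real.sinh x)]
  have hE : Complex.exp u ≠ 0 := Complex.exp_ne_zero u
  have hE2 : Complex.exp u * Complex.exp u = (1 + z) / (1 - z) := by
    rw [← Complex.exp_add]
    have huu : u + u = w := by rw [hu]; ring
    rw [huu, hw]
  have hE2' : Complex.exp u * Complex.exp u * (1 - z) = 1 + z := by
    field_simp at hE2
    linear_combination hE2
  have hzeq : z = Complex.sinh u / Complex.cosh u := by
    rw [eq_div_iff hcoshne, Complex.sinh, Complex.cosh, Complex.exp_neg]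
    field_simp
    ring_nf
    ring_nf at hE2'
    linear_combination -hE2'
  have htan : 0 < Real.tan (1/2) :=
    Real.tan_pos_of_pos_of_lt_pi_div_two (by norm_num) (by nlinarith [Real.pi_gt_three])
  have hcoshalf : 0 < Real.cos (1/2) := by
    apply Real.cos_pos_of_mem_Ioo
    constructor <;> nlinarith [Real.pi_gt_three]
  refine lt_of_pow_lt_pow_left₀ 2 htan.le ?_
  rw [Complex.sq_norm, hzeq, map_div₀, Real.tan_eq_sin_div_cos, div_pow, hnsinh, hncosh]
  rw [div_lt_div_iff₀ (by nlinarith [sq_nonneg (Real.sinh x)]) (by positivity)]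
  linarith [key_ineq' x y hxy]
end

section
/- Let −1 < D < C ≤ 1 and let α₁, α₂ > 0 be real numbers with (α₁ − α₂)(1 − D²) ≥ e(C − D)(1 + |D|). Let p : ℂ → ℂ be analytic on the open unit disk 𝔻 with p(0) = 1, and suppose that for every z ∈ 𝔻 the value 1 + α₁·z·p'(z) + α₂·z²·p''(z) lies in the open disk {w ∈ ℂ : |w − (1−CD)/(1−D²)| < (C−D)/(1−D²)}. Then for every z ∈ 𝔻, |Log(p(z))| < 1, where Log is the principal complex logarithm; i.e., p is subordinate to e^z. -/
open Metric Filter Set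

set_option maxHeartbeats 1000000 in
theorem subordination_janowski (C D α₁ α₂ : ℝ) (hD : -1 < D) (hDC : D < C) (hC : C ≤ 1)
    (h₁ : 0 < α₁) (h₂ : 0 < α₂)
    (hcond : (α₁ - α₂) * (1 - D^2) ≥ Real.exp 1 * (C - D) * (1 + |D|))
    (p : ℂ → ℂ) (hp : DifferentiableOn ℂ p (Metric.ball (0:ℂ) 1)) (hp0 : p 0 = 1)
    (hsub : ∀ z ∈ Metric.ball (0:ℂ) 1,
      ‖1 + α₁ * z * deriv p z + α₂ * z^2 * deriv (deriv p) z
        - ((1 - C*D)/(1 - D^2) : ℝ)‖ < (C - D)/(1 - D^2)) :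
    ∀ z ∈ Metric.ball (0:ℂ) 1, ‖Complex.log (p z)‖ < 1 := by
  have hDabs : |D| < 1 := abs_lt.2 ⟨hD, hDC.trans_le hC⟩
  have hD2 : 0 < 1 - D^2 := by nlinarith [sq_abs D, abs_nonneg D]
  have hCD : 0 < C - D := sub_pos.2 hDC
  have he : (0:ℝ) < Real.exp 1 := Real.exp_pos 1
  have he2 : (2:ℝ) < Real.exp 1 := by
    have := Real.exp_one_gt_d9; linarith
  set M₀ : ℝ := (C - D) * (1 + |D|) / (1 - D^2) with hM₀def
  have hM₀pos : 0 < M₀ := by positivity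
  have hM₀e : M₀ * Real.exp 1 ≤ α₁ - α₂ := by
    rw [div_mul_eq_mul_div, div_le_iff₀ hD2]; nlinarith
  have hαα : α₂ < α₁ := by nlinarith
  -- the function g
  set g : ℂ → ℂ := fun w => (α₁:ℂ) * w * deriv p w + (α₂:ℂ) * w^2 * deriv (deriv p) w
    with hgdef
  have hA : AnalyticOnNhd ℂ p (ball 0 1) := hp.analyticOnNhd isOpen_ball
  have hA1 : AnalyticOnNhd ℂ (deriv p) (ball 0 1) := hA.deriv
  have hA2 : AnalyticOnNhd ℂ (deriv (deriv p)) (ball 0 1) := hA1.deriv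
  have hgdiff : DifferentiableOn ℂ g (ball 0 1) :=
    (((differentiableOn_const _).mul differentiableOn_id).mul hA1.differentiableOn).add
      (((differentiableOn_const _).mul (differentiableOn_id.pow 2)).mul hA2.differentiableOn)
  have hg0 : g 0 = 0 := by simp [hgdef]
  -- bound on g from hsub
  have hgbound : ∀ w ∈ ball (0:ℂ) 1, ‖g w‖ < M₀ := by
    intro w hw
    have h1 := hsub w hw
    have key : g w = (1 + (α₁:ℂ) * w * deriv p w + (α₂:ℂ) * w^2 * deriv (deriv p) w
        - (((1 - C*D)/(1 - D^2) : ℝ) : ℂ)) + ((((1 - C*D)/(1 - D^2) - 1 : ℝ)) : ℂ) := by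
      push_cast; ring
    have habs : |(1 - C*D)/(1 - D^2) - 1| = |D| * (C - D) / (1 - D^2) := by
      rw [show (1 - C*D)/(1-D^2) - 1 = -(D*(C-D))/(1-D^2) by field_simp; ring,
        abs_div, abs_neg, abs_mul, abs_of_pos hCD, abs_of_pos hD2]
    have h2 : ‖g w‖ ≤ ‖(1 + (α₁:ℂ) * w * deriv p w + (α₂:ℂ) * w^2 * deriv (deriv p) w
        - (((1 - C*D)/(1 - D^2) : ℝ) : ℂ))‖ + ‖((((1 - C*D)/(1 - D^2) - 1 : ℝ)) : ℂ)‖ :=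
      key ▸ norm_add_le _ _
    rw [Complex.norm_real, Real.norm_eq_abs, habs] at h2
    have hM : (C - D)/(1 - D^2) + |D| * (C - D) / (1 - D^2) = M₀ := by
      rw [hM₀def]; ring
    linarith
  -- Schwarz lemma
  have hSch : ∀ w ∈ ball (0:ℂ) 1, ‖g w‖ ≤ M₀ * ‖w‖ := by
    intro w hw
    have hmaps : MapsTo g (ball 0 1) (ball (g 0) M₀) := by
      intro v hv
      rw [mem_ball, dist_eq_norm, hg0, sub_zero]
      exact hgbound v hv
    have := Complex.dist_le_div_mul_dist_of_mapsTo_ball hgdiff (hmaps.mono_right ball_subset_closedBall) hw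
    simpa [hg0, dist_eq_norm, div_one] using this
  -- solve the ODE: bound on w * deriv p w
  have hu : ∀ w ∈ ball (0:ℂ) 1, ‖w * deriv p w‖ ≤ M₀ / α₁ * ‖w‖ := by
    intro w hw
    have hwn : ‖w‖ < 1 := by simpa using hw
    set κ : ℝ := α₁ / α₂ with hκdef
    have hκ1 : 1 < κ := (one_lt_div h₂).2 hαα
    set u : ℂ → ℂ := fun ζ => ζ * deriv p ζ with hudef
    set φ : ℝ → ℂ := fun t => (t ^ (κ-1) : ℝ) • u (t • w) with hφdef
    have htwmem : ∀ t : ℝ, 0 ≤ t → t ≤ 1 → t • w ∈ ball (0:ℂ) 1 := by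
      intro t ht ht1
      rw [mem_ball_zero_iff, norm_smul, Real.norm_eq_abs, abs_of_nonneg ht]
      nlinarith [norm_nonneg w]
    have hα₂C : (α₂:ℂ) ≠ 0 := by exact_mod_cast h₂.ne'
    have hφd : ∀ t : ℝ, 0 < t → t ≤ 1 →
        HasDerivAt φ ((t ^ (κ-2) / α₂ : ℝ) • g (t • w)) t := by
      intro t ht ht1
      have htw := htwmem t ht.le ht1
      have hr : HasDerivAt (fun s : ℝ => s ^ (κ-1)) ((κ-1) * t ^ (κ-1-1)) t :=
        Real.hasDerivAt_rpow_const (Or.inl ht.ne')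
      have hc : HasDerivAt (fun s : ℝ => s • w) w t := by
        simpa using (hasDerivAt_id t).smul_const w
      have hd2 : HasDerivAt (deriv p) (deriv (deriv p) (t • w)) (t • w) :=
        (hA1 _ htw).differentiableAt.hasDerivAt
      have hud : HasDerivAt u (deriv p (t • w) + (t • w) * deriv (deriv p) (t • w))
          (t • w) := by
        have := (hasDerivAt_id' ((t:ℝ) • w)).mul hd2; simp only [one_mul] at this; exact this
      have hcomp : HasDerivAt (fun s : ℝ => u (s • w))
          (w • (deriv p (t • w) + (t • w) * deriv (deriv p) (t • w))) t :=
        by have := hud.scomp t hc; exact this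
      have hprod := hr.smul hcomp
      refine (hprod.congr_deriv ?_ :)
      have hexp : κ - 1 - 1 = κ - 2 := by ring
      have hsplit : t ^ (κ-1) = t ^ (κ-2) * t := by
        rw [show κ - 1 = (κ-2) + 1 by ring, Real.rpow_add_one ht.ne']
      rw [hexp, hsplit]
      have hκC : (κ:ℂ) = (α₁:ℂ) / (α₂:ℂ) := by rw [hκdef]; push_cast; ring
      simp only [hgdef, hudef, Complex.real_smul, Complex.ofReal_mul, Complex.ofReal_div,
        Complex.ofReal_sub, Complex.ofReal_one, smul_eq_mul]
      rw [show ((κ:ℂ) - 1) = (α₁:ℂ)/(α₂:ℂ) - 1 by rw [← hκC]]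
      field_simp
      ring
    have hφ1 : φ 1 = u w := by simp [hφdef]
    set c₀ : ℝ := M₀ * ‖w‖ / α₁ with hc₀def
    have hc₀0 : 0 ≤ c₀ := by positivity
    have main : ∀ ε : ℝ, 0 < ε → ε ≤ 1 → ‖φ 1‖ ≤ ‖φ ε‖ + c₀ := by
      intro ε hε hε1
      set B : ℝ → ℝ := fun t => ‖φ ε‖ + c₀ * (t ^ κ - ε ^ κ) with hBdef
      have hB' : ∀ x : ℝ, HasDerivAt B (c₀ * (κ * x ^ (κ-1))) x := by
        intro x
        exact (((Real.hasDerivAt_rpow_const (p := κ) (Or.inr hκ1.le)).sub_const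
          (ε ^ κ)).const_mul c₀).const_add _
      have hcont : ContinuousOn φ (Icc ε 1) := by
        intro t ht
        exact ((hφd t (hε.trans_le ht.1) ht.2).continuousAt).continuousWithinAt
      have hderiv : ∀ x ∈ Ico ε 1, HasDerivWithinAt φ
          ((fun x : ℝ => (x ^ (κ-2) / α₂ : ℝ) • g (x • w)) x) (Ici x) x :=
        fun x hx => (hφd x (hε.trans_le hx.1) hx.2.le).hasDerivWithinAt
      have hbound : ∀ x ∈ Ico ε 1,
          ‖(x ^ (κ-2) / α₂ : ℝ) • g (x • w)‖ ≤ c₀ * (κ * x ^ (κ-1)) := by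
        intro x hx
        have hx0 : 0 < x := hε.trans_le hx.1
        have hxw := htwmem x hx0.le hx.2.le
        have hg1 : ‖g (x • w)‖ ≤ M₀ * (x * ‖w‖) := by
          have := hSch (x • w) hxw
          rwa [norm_smul, Real.norm_eq_abs, abs_of_nonneg hx0.le] at this
        rw [norm_smul, Real.norm_eq_abs, abs_of_nonneg (by positivity)]
        have hxk : 0 ≤ x ^ (κ-2) := Real.rpow_nonneg hx0.le _
        have hsplit : x ^ (κ-1) = x ^ (κ-2) * x := by
          rw [show κ - 1 = (κ-2) + 1 by ring, Real.rpow_add_one hx0.ne']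
        rw [hsplit, hc₀def, hκdef]
        calc x ^ (κ-2) / α₂ * ‖g (x • w)‖ ≤ x ^ (κ-2) / α₂ * (M₀ * (x * ‖w‖)) := by
              apply mul_le_mul_of_nonneg_left hg1 (by positivity)
          _ = M₀ * ‖w‖ / α₁ * (α₁ / α₂ * (x ^ (κ-2) * x)) := by field_simp
      have ha : ‖φ ε‖ ≤ B ε := by simp [hBdef]
      have := image_norm_le_of_norm_deriv_right_le_deriv_boundary hcont hderiv ha hB' hbound
        (right_mem_Icc.2 hε1)
      have hεκ : 0 ≤ ε ^ κ := Real.rpow_nonneg hε.le _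
      have h1κ : (1:ℝ) ^ κ = 1 := Real.one_rpow _
      rw [hBdef] at this
      simp only [h1κ] at this
      nlinarith
    -- take the limit ε → 0⁺
    have hlim : Tendsto (fun ε : ℝ => ‖φ ε‖ + c₀) (nhdsWithin 0 (Ioi 0)) (nhds (0 + c₀)) := by
      refine Tendsto.add ?_ tendsto_const_nhds
      have h1 : Tendsto φ (nhdsWithin 0 (Ioi 0)) (nhds 0) := by
        have hrp : Tendsto (fun t : ℝ => (t ^ (κ-1) : ℝ)) (nhdsWithin 0 (Ioi 0)) (nhds 0) := by
          have hct : ContinuousAt (fun t : ℝ => t ^ (κ-1)) 0 :=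
            Real.continuousAt_rpow_const 0 (κ-1) (Or.inr (by linarith))
          have := hct.continuousWithinAt (s := Ioi 0)
          rwa [ContinuousWithinAt, Real.zero_rpow (by linarith : κ - 1 ≠ 0)] at this
        have huc : Tendsto (fun t : ℝ => u (t • w)) (nhdsWithin 0 (Ioi 0)) (nhds 0) := by
          have hu0 : ContinuousAt u 0 := by
            have : DifferentiableAt ℂ u 0 :=
              differentiableAt_id.mul (hA1 0 (by simp)).differentiableAt
            exact this.continuousAt
          have hc : ContinuousAt (fun t : ℝ => t • w) 0 :=
            (continuous_id.smul continuous_const).continuousAt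
          have hu0' : ContinuousAt u ((0:ℝ) • w) := by simpa using hu0
          have hc2 : ContinuousAt (fun t : ℝ => u (t • w)) 0 := by have := ContinuousAt.comp (x := (0:ℝ)) hu0' hc; exact this
          have h3 := hc2.tendsto
          have h4 : u ((0:ℝ) • w) = 0 := by simp [hudef]
          rw [h4] at h3
          exact h3.mono_left nhdsWithin_le_nhds
        have := hrp.smul huc
        simpa [hφdef] using this
      simpa using h1.norm
    have hev : ∀ᶠ ε in nhdsWithin (0:ℝ) (Ioi 0), ‖u w‖ ≤ ‖φ ε‖ + c₀ := by
      filter_upwards [Ioc_mem_nhdsGT_of_mem (Set.left_mem_Ico.2 zero_lt_one)] with ε hε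
      rw [← hφ1]
      exact main ε hε.1 hε.2
    have := ge_of_tendsto hlim hev
    rw [zero_add] at this
    calc ‖w * deriv p w‖ = ‖u w‖ := by rw [hudef]
      _ ≤ c₀ := this
      _ = M₀ / α₁ * ‖w‖ := by rw [hc₀def]; ring
  -- bound on deriv p
  have hM₀α : 0 < M₀ / α₁ := by positivity
  have hderivb : ∀ w ∈ ball (0:ℂ) 1, ‖deriv p w‖ ≤ M₀ / α₁ := by
    intro w hw
    rcases eq_or_ne w 0 with rfl | hw0
    · have hcont : ContinuousAt (deriv p) 0 := (hA1 0 (by simp)).continuousAt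
      have htend : Tendsto (fun ζ : ℂ => ‖deriv p ζ‖) (nhdsWithin 0 {(0:ℂ)}ᶜ)
          (nhds ‖deriv p 0‖) := (hcont.norm).continuousWithinAt
      refine le_of_tendsto htend ?_
      have hball : ball (0:ℂ) 1 ∈ nhdsWithin (0:ℂ) {(0:ℂ)}ᶜ :=
        nhdsWithin_le_nhds (ball_mem_nhds _ one_pos)
      filter_upwards [hball, self_mem_nhdsWithin] with ζ h1 h2
      have := hu ζ h1
      rw [norm_mul] at this
      have hζ : 0 < ‖ζ‖ := norm_pos_iff.2 h2
      rw [mul_comm] at this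
      exact le_of_mul_le_mul_right this hζ
    · have := hu w hw
      rw [norm_mul] at this
      have hζ : 0 < ‖w‖ := norm_pos_iff.2 hw0
      rw [mul_comm] at this
      exact le_of_mul_le_mul_right this hζ
  -- mean value inequality
  intro z hz
  have hz1 : ‖z‖ < 1 := by simpa using hz
  have hpz : ‖p z - 1‖ < M₀ / α₁ := by
    have hmv := Convex.norm_image_sub_le_of_norm_deriv_le
      (fun w hw => (hA w hw).differentiableAt) hderivb (convex_ball (0:ℂ) 1)
      (mem_ball_self one_pos) hz
    rw [hp0, sub_zero] at hmv
    calc ‖p z - 1‖ ≤ M₀ / α₁ * ‖z‖ := hmv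
      _ < M₀ / α₁ * 1 := by exact mul_lt_mul_of_pos_left hz1 hM₀α
      _ = M₀ / α₁ := mul_one _
  have h1e : M₀ / α₁ ≤ 1 / Real.exp 1 := by
    rw [div_le_div_iff₀ h₁ he]
    nlinarith
  have hpz2 : ‖p z - 1‖ < 1 / Real.exp 1 := hpz.trans_le h1e
  have hhalf : ‖p z - 1‖ ≤ 1 / 2 := by
    have h12 : 1 / Real.exp 1 < 1 / 2 := by
      rw [div_lt_div_iff₀ he two_pos]; linarith
    linarith
  have hlog := Complex.norm_log_one_add_half_le_self (z := p z - 1) hhalf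
  rw [show (1 : ℂ) + (p z - 1) = p z by ring] at hlog
  calc ‖Complex.log (p z)‖ ≤ 3/2 * ‖p z - 1‖ := hlog
    _ < 3/2 * (1 / Real.exp 1) := by nlinarith
    _ < 1 := by rw [mul_one_div, div_lt_one he]; linarith
end

section
/- Let α₁, α₂ > 0 be real numbers with α₁ − α₂ ≥ e(e − 1). Let p : ℂ → ℂ be analytic on the open unit disk 𝔻 with p(0) = 1, and suppose that for every z ∈ 𝔻 one has |Log(1 + α₁·z·p'(z) + α₂·z²·p''(z))| < 1, where Log is the principal complex logarithm. Then for every z ∈ 𝔻, |Log(p(z))| < 1. -/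
open Complex Metric Set Filter
open scoped Topology

set_option maxHeartbeats 1000000 in
private lemma qbound_aux (α₁ α₂ : ℝ) (h₁ : 0 < α₁) (h₂ : 0 < α₂) (hα12 : α₂ < α₁)
    (p : ℂ → ℂ) (hp1 : AnalyticOnNhd ℂ (deriv p) (Metric.ball (0:ℂ) 1))
    (hgs : ∀ w ∈ Metric.ball (0:ℂ) 1,
      ‖(α₁:ℂ) * w * deriv p w + (α₂:ℂ) * w^2 * deriv (deriv p) w‖ ≤ 2 * ‖w‖) :
    ∀ w ∈ Metric.ball (0:ℂ) 1, ‖w * deriv p w‖ ≤ 2 * ‖w‖ / α₁ := by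
  set B := Metric.ball (0:ℂ) 1 with hBdef
  set g : ℂ → ℂ := fun w => (α₁:ℂ) * w * deriv p w + (α₂:ℂ) * w^2 * deriv (deriv p) w with hgdef
  set q : ℂ → ℂ := fun w => w * deriv p w with hqdef
  have hp2 : AnalyticOnNhd ℂ (deriv (deriv p)) B := hp1.deriv
  have hqd : ∀ u ∈ B, HasDerivAt q (deriv p u + u * deriv (deriv p) u) u := by
    intro u hu
    have h1 : HasDerivAt (deriv p) (deriv (deriv p) u) u :=
      ((hp1 u hu).differentiableAt).hasDerivAt
    have := (hasDerivAt_id u).mul h1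
    exact this.congr_deriv (by simp)
  have hq0 : q 0 = 0 := by simp [hqdef]
  have hgd : DifferentiableOn ℂ g B := by
    apply DifferentiableOn.add
    · exact (differentiableOn_id.const_mul _).mul hp1.differentiableOn
    · exact ((differentiableOn_id.pow 2).const_mul _).mul hp2.differentiableOn
  set β : ℝ := (α₁ - α₂)/α₂ with hβdef
  have hβ : 0 < β := div_pos (by linarith) h₂
  have hβ1 : β + 1 = α₁ / α₂ := by rw [hβdef, div_add_one h₂.ne', sub_add_cancel]
  intro w hw
  have hmem : ∀ t : ℝ, 0 ≤ t → t ≤ 1 → (↑t * w) ∈ B := by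
    intro t h0 ht1
    have hw' : ‖w‖ < 1 := by simpa [hBdef, mem_ball, dist_eq_norm] using hw
    have : ‖(t:ℂ) * w‖ = t * ‖w‖ := by
      rw [norm_mul, Complex.norm_real, Real.norm_eq_abs, _root_.abs_of_nonneg h0]
    simp only [hBdef, mem_ball, dist_eq_norm, sub_zero]
    rw [this]
    nlinarith [norm_nonneg w]
  set F : ℝ → ℂ := fun t => (t ^ β : ℝ) • q (↑t * w) with hFdef
  set D : ℝ → ℂ := fun t => (t ^ (β-1) : ℝ) • (g (↑t * w) / (α₂:ℂ)) with hDdef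
  have hFderiv : ∀ t ∈ Set.Ioc (0:ℝ) 1, HasDerivAt F (D t) t := by
    intro t ht
    obtain ⟨ht0, ht1⟩ := ht
    have hmem' := hmem t ht0.le ht1
    have h1 : HasDerivAt (fun s : ℝ => s ^ β) (β * t ^ (β - 1)) t :=
      Real.hasDerivAt_rpow_const (Or.inl ht0.ne')
    have h2c : HasDerivAt (fun u : ℂ => q (u * w))
        ((deriv p (↑t*w) + (↑t*w) * deriv (deriv p) (↑t*w)) * w) ↑t := by
      have := (hqd _ hmem').comp (↑t : ℂ) (hasDerivAt_mul_const w)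
      exact this
    have h2 : HasDerivAt (fun s : ℝ => q (↑s * w))
        ((deriv p (↑t*w) + (↑t*w) * deriv (deriv p) (↑t*w)) * w) t := h2c.comp_ofReal
    have h3 := h1.smul h2
    refine h3.congr_deriv ?_
    have hts : (t:ℝ) ^ β = t ^ (β - 1) * t := by
      rw [← Real.rpow_add_one ht0.ne' (β - 1), sub_add_cancel]
    simp only [hDdef, hgdef, hqdef, real_smul, Complex.ofReal_mul, hts]
    have hβc : (β : ℂ) = ((α₁ : ℂ) - α₂)/α₂ := by rw [hβdef]; push_cast; ring
    rw [hβc]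
    have hα₂ : (α₂ : ℂ) ≠ 0 := by exact_mod_cast h₂.ne'
    field_simp
    ring
  have key : ∀ ε ∈ Set.Ioc (0:ℝ) 1, ‖q w‖ ≤ 2 * ‖w‖ / α₁ + ‖q (↑ε * w)‖ := by
    intro ε hε
    obtain ⟨hε0, hε1⟩ := hε
    have huIcc : Set.uIcc ε 1 = Set.Icc ε 1 := Set.uIcc_of_le hε1
    have hsubset : Set.Icc ε 1 ⊆ Set.Ioc 0 1 := fun t ht => ⟨lt_of_lt_of_le hε0 ht.1, ht.2⟩
    have hDcont : ContinuousOn D (Set.Icc ε 1) := by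
      apply ContinuousOn.fun_smul
      · apply ContinuousOn.rpow_const continuousOn_id
        intro t ht
        exact Or.inl (ne_of_gt (lt_of_lt_of_le hε0 ht.1))
      · apply ContinuousOn.div_const
        apply (hgd.continuousOn).comp
        · exact (Complex.continuous_ofReal.mul continuous_const).continuousOn
        · intro t ht
          exact hmem t (hε0.le.trans ht.1) ht.2
    have hint : IntervalIntegrable D MeasureTheory.volume ε 1 := by
      apply ContinuousOn.intervalIntegrable
      rwa [huIcc]
    have hFTC : ∫ t in ε..1, D t = F 1 - F ε := by
      apply intervalIntegral.integral_eq_sub_of_hasDerivAt _ hint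
      intro t ht
      rw [huIcc] at ht
      exact hFderiv t (hsubset ht)
    have hbnd : ∀ t ∈ Set.Ioc ε 1, ‖D t‖ ≤ (2 * ‖w‖ / α₂) * t ^ β := by
      intro t ht
      have ht0 : (0:ℝ) < t := lt_trans hε0 ht.1
      have hmem' := hmem t ht0.le ht.2
      have hgb : ‖g (↑t * w)‖ ≤ 2 * (t * ‖w‖) := by
        have := hgs _ hmem'
        rwa [norm_mul, Complex.norm_real, Real.norm_eq_abs, _root_.abs_of_nonneg ht0.le] at this
      have hDt : ‖D t‖ = t ^ (β-1) * (‖g (↑t*w)‖ / α₂) := by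
        rw [hDdef]
        rw [norm_smul, Real.norm_eq_abs, _root_.abs_of_nonneg (Real.rpow_nonneg ht0.le _),
          norm_div, Complex.norm_real, Real.norm_eq_abs, _root_.abs_of_nonneg h₂.le]
      rw [hDt]
      have hts : (t:ℝ) ^ β = t ^ (β - 1) * t := by
        rw [← Real.rpow_add_one ht0.ne' (β - 1), sub_add_cancel]
      rw [hts]
      have hrp : (0:ℝ) ≤ t ^ (β-1) := Real.rpow_nonneg ht0.le _
      calc t ^ (β-1) * (‖g (↑t*w)‖ / α₂) ≤ t ^ (β-1) * (2 * (t * ‖w‖) / α₂) := by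
            gcongr
        _ = 2 * ‖w‖ / α₂ * (t ^ (β-1) * t) := by ring
    have hnorm : ‖∫ t in ε..1, D t‖ ≤ |∫ t in ε..1, (2 * ‖w‖ / α₂) * t ^ β| := by
      apply intervalIntegral.norm_integral_le_abs_of_norm_le
      · rw [Set.uIoc_of_le hε1]
        exact (MeasureTheory.ae_restrict_iff' measurableSet_Ioc).2
          (MeasureTheory.ae_of_all _ hbnd)
      · apply ContinuousOn.intervalIntegrable
        apply ContinuousOn.mul continuousOn_const
        apply ContinuousOn.rpow_const continuousOn_id
        intro t ht
        rw [huIcc] at ht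
        exact Or.inl (ne_of_gt (lt_of_lt_of_le hε0 ht.1))
    have hval : (∫ t in ε..1, (2 * ‖w‖ / α₂) * t ^ β)
        = (2 * ‖w‖ / α₂) * ((1 - ε^(β+1))/(β+1)) := by
      rw [intervalIntegral.integral_const_mul, integral_rpow (Or.inl (by linarith))]
      rw [Real.one_rpow]
    have hle : (2 * ‖w‖ / α₂) * ((1 - ε^(β+1))/(β+1)) ≤ 2 * ‖w‖ / α₁ := by
      have h1 : (0:ℝ) ≤ ε ^ (β+1) := Real.rpow_nonneg hε0.le _
      have h2' : (0:ℝ) < β + 1 := by linarith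
      have h3 : (1 - ε^(β+1))/(β+1) ≤ 1/(β+1) :=
        (div_le_div_iff_of_pos_right h2').mpr (by linarith)
      have h4 : (2 * ‖w‖ / α₂) * (1/(β+1)) = 2 * ‖w‖ / α₁ := by
        rw [hβ1]
        field_simp
      calc (2 * ‖w‖ / α₂) * ((1 - ε^(β+1))/(β+1))
          ≤ (2 * ‖w‖ / α₂) * (1/(β+1)) := by
            apply mul_le_mul_of_nonneg_left h3
            positivity
        _ = 2 * ‖w‖ / α₁ := h4
    have habs : |∫ t in ε..1, (2 * ‖w‖ / α₂) * t ^ β| ≤ 2 * ‖w‖ / α₁ := by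
      rw [hval, _root_.abs_of_nonneg]
      · exact hle
      · have h1 : ε ^ (β+1) ≤ 1 := Real.rpow_le_one hε0.le hε1 (by linarith)
        have h0 : (0:ℝ) ≤ ε ^ (β+1) := Real.rpow_nonneg hε0.le _
        have h2' : (0:ℝ) < β + 1 := by linarith
        apply mul_nonneg
        · positivity
        · exact div_nonneg (by linarith) h2'.le
    have hF1 : F 1 = q w := by simp [hFdef]
    have hFε : ‖F ε‖ ≤ ‖q (↑ε * w)‖ := by
      rw [hFdef]
      simp only [norm_smul, Real.norm_eq_abs, _root_.abs_of_nonneg (Real.rpow_nonneg hε0.le _)]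
      have : ε ^ β ≤ 1 := Real.rpow_le_one hε0.le hε1 hβ.le
      nlinarith [norm_nonneg (q (↑ε * w)), Real.rpow_nonneg hε0.le β]
    have h5 : ‖q w‖ - ‖F ε‖ ≤ ‖F 1 - F ε‖ := by
      rw [hF1]
      exact norm_sub_norm_le _ _
    rw [← hFTC] at h5
    have := hnorm.trans habs
    linarith
  -- take limit ε → 0⁺
  have hqc : ContinuousAt (fun ε : ℝ => q (↑ε * w)) 0 := by
    have h0B : (0:ℂ) ∈ B := by simp [hBdef]
    have hc1 : ContinuousAt q 0 := (hqd 0 h0B).continuousAt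
    have hc2 : ContinuousAt (fun ε : ℝ => (↑ε * w : ℂ)) 0 :=
      (Complex.continuous_ofReal.mul continuous_const).continuousAt
    have := ContinuousAt.comp_of_eq hc1 hc2 (by simp)
    exact this
  have hlim : Tendsto (fun ε : ℝ => 2 * ‖w‖ / α₁ + ‖q (↑ε * w)‖)
      (𝓝[>] (0:ℝ)) (𝓝 (2 * ‖w‖ / α₁ + 0)) := by
    apply Tendsto.const_add
    have : Tendsto (fun ε : ℝ => ‖q (↑ε * w)‖) (𝓝 (0:ℝ)) (𝓝 ‖q (((0:ℝ):ℂ) * w)‖) :=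
      (hqc.norm).tendsto
    have h0 : ‖q (((0:ℝ):ℂ) * w)‖ = 0 := by simp [hq0]
    rw [h0] at this
    exact this.mono_left nhdsWithin_le_nhds
  have hev : ∀ᶠ (ε : ℝ) in 𝓝[>] (0:ℝ), ‖q w‖ ≤ 2 * ‖w‖ / α₁ + ‖q (↑ε * w)‖ := by
    filter_upwards [Ioc_mem_nhdsGT (by norm_num : (0:ℝ) < 1)] with ε hε
    exact key ε hε
  have := ge_of_tendsto hlim hev
  linarith

set_option maxHeartbeats 1000000 in
theorem subordination_exp (α₁ α₂ : ℝ) (h₁ : 0 < α₁) (h₂ : 0 < α₂)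
    (hcond : α₁ - α₂ ≥ Real.exp 1 * (Real.exp 1 - 1))
    (p : ℂ → ℂ) (hp : DifferentiableOn ℂ p (Metric.ball (0:ℂ) 1)) (hp0 : p 0 = 1)
    (hsub : ∀ z ∈ Metric.ball (0:ℂ) 1,
      ‖Complex.log (1 + α₁ * z * deriv p z + α₂ * z^2 * deriv (deriv p) z)‖ < 1) :
    ∀ z ∈ Metric.ball (0:ℂ) 1, ‖Complex.log (p z)‖ < 1 := by
  have hexp : (2.7182818283 : ℝ) < Real.exp 1 := Real.exp_one_gt_d9
  have hα4 : (4:ℝ) < α₁ := by nlinarith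
  have hα12 : α₂ < α₁ := by nlinarith
  set B := Metric.ball (0:ℂ) 1 with hBdef
  have hpa : AnalyticOnNhd ℂ p B := hp.analyticOnNhd isOpen_ball
  have hp1 : AnalyticOnNhd ℂ (deriv p) B := hpa.deriv
  have hp2 : AnalyticOnNhd ℂ (deriv (deriv p)) B := hp1.deriv
  set g : ℂ → ℂ := fun w => (α₁:ℂ) * w * deriv p w + (α₂:ℂ) * w^2 * deriv (deriv p) w with hgdef
  set q : ℂ → ℂ := fun w => w * deriv p w with hqdef
  have hg0 : g 0 = 0 := by simp [hgdef]
  have hgd : DifferentiableOn ℂ g B := by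
    apply DifferentiableOn.add
    · exact (differentiableOn_id.const_mul _).mul hp1.differentiableOn
    · exact ((differentiableOn_id.pow 2).const_mul _).mul hp2.differentiableOn
  -- ‖g w‖ < 2 on B
  have hg2 : ∀ w ∈ B, ‖g w‖ < 2 := by
    intro w hw
    have h1 := hsub w hw
    have heq : (1 : ℂ) + (α₁:ℂ) * w * deriv p w + (α₂:ℂ) * w^2 * deriv (deriv p) w
        = 1 + g w := by rw [hgdef]; ring
    rw [heq] at h1
    by_cases h0 : (1 : ℂ) + g w = 0
    · have hgw : g w = -1 := by linear_combination h0
      rw [hgw]; norm_num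
    · have hel : Complex.exp (Complex.log (1 + g w)) = 1 + g w := Complex.exp_log h0
      have h2 := Complex.norm_exp_sub_one_le (x := Complex.log (1 + g w)) h1.le
      rw [hel] at h2
      have h3 : ‖g w‖ ≤ 2 * ‖Complex.log (1 + g w)‖ := by
        simpa using h2
      calc ‖g w‖ = ‖g w‖ := rfl
        _ ≤ 2 * ‖Complex.log (1 + g w)‖ := h3
        _ < 2 * 1 := by linarith
        _ = 2 := by norm_num
  -- Schwarz lemma : ‖g w‖ ≤ 2 ‖w‖
  have hmaps : MapsTo g B (ball (g 0) 2) := by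
    intro w hw
    rw [hg0]
    simpa [mem_ball, dist_eq_norm] using hg2 w hw
  have hgs : ∀ w ∈ B, ‖g w‖ ≤ 2 * ‖w‖ := by
    intro w hw
    have := Complex.dist_le_div_mul_dist_of_mapsTo_ball hgd (hmaps.mono_right ball_subset_closedBall) hw
    simpa [hg0, dist_eq_norm] using this
  -- q facts
  have hqd : ∀ u ∈ B, HasDerivAt q (deriv p u + u * deriv (deriv p) u) u := by
    intro u hu
    have h1 : HasDerivAt (deriv p) (deriv (deriv p) u) u :=
      ((hp1 u hu).differentiableAt).hasDerivAt
    have := (hasDerivAt_id u).mul h1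
    exact this.congr_deriv (by simp)
  have hq0 : q 0 = 0 := by simp [hqdef]
  set β : ℝ := (α₁ - α₂)/α₂ with hβdef
  have hβ : 0 < β := div_pos (by linarith) h₂
  have hβ1 : β + 1 = α₁ / α₂ := by rw [hβdef, div_add_one h₂.ne', sub_add_cancel]
  have hqbd := qbound_aux α₁ α₂ h₁ h₂ hα12 p hp1 hgs
  -- Step B : ‖p z - 1‖ ≤ 2‖z‖/α₁ and conclusion
  intro z hz
  have hmemz : ∀ t : ℝ, 0 ≤ t → t ≤ 1 → (↑t * z) ∈ B := by
    intro t h0 ht1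
    have hz' : ‖z‖ < 1 := by simpa [hBdef, mem_ball, dist_eq_norm] using hz
    have : ‖(t:ℂ) * z‖ = t * ‖z‖ := by
      rw [norm_mul, Complex.norm_real, Real.norm_eq_abs, _root_.abs_of_nonneg h0]
    simp only [hBdef, mem_ball, dist_eq_norm, sub_zero]
    rw [this]
    nlinarith [norm_nonneg z]
  have hPd : ∀ t ∈ Set.uIcc (0:ℝ) 1,
      HasDerivAt (fun s : ℝ => p (↑s * z)) (deriv p (↑t*z) * z) t := by
    intro t ht
    rw [Set.uIcc_of_le zero_le_one] at ht
    have h1 : HasDerivAt p (deriv p (↑t*z)) (↑t*z) :=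
      ((hpa _ (hmemz t ht.1 ht.2)).differentiableAt).hasDerivAt
    exact (h1.comp (↑t : ℂ) (hasDerivAt_mul_const z)).comp_ofReal
  have hintz : IntervalIntegrable (fun t : ℝ => deriv p (↑t*z) * z)
      MeasureTheory.volume 0 1 := by
    apply ContinuousOn.intervalIntegrable
    apply ContinuousOn.mul _ continuousOn_const
    apply (hp1.continuousOn).comp
    · exact (Complex.continuous_ofReal.mul continuous_const).continuousOn
    · intro t ht
      rw [Set.uIcc_of_le zero_le_one] at ht
      exact hmemz t ht.1 ht.2
  have hFTC : ∫ t in (0:ℝ)..1, deriv p (↑t*z) * z = p z - 1 := by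
    rw [intervalIntegral.integral_eq_sub_of_hasDerivAt hPd hintz]
    norm_num [hp0]
  have hbd : ∀ t ∈ Set.uIoc (0:ℝ) 1, ‖deriv p (↑t*z) * z‖ ≤ 2 * ‖z‖ / α₁ := by
    intro t ht
    rw [Set.uIoc_of_le zero_le_one] at ht
    have h : ‖(↑t*z : ℂ) * deriv p (↑t*z)‖ ≤ 2 * ‖(↑t*z : ℂ)‖ / α₁ :=
      hqbd _ (hmemz t ht.1.le ht.2)
    have h2 : ‖(↑t*z) * deriv p (↑t*z)‖ = t * ‖deriv p (↑t*z) * z‖ := by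
      rw [show (↑t*z) * deriv p (↑t*z) = ↑t * (deriv p (↑t*z) * z) by ring]
      rw [norm_mul, Complex.norm_real, Real.norm_eq_abs, _root_.abs_of_nonneg ht.1.le]
    have hn : ‖(t:ℂ)*z‖ = t * ‖z‖ := by
      rw [norm_mul, Complex.norm_real, Real.norm_eq_abs, _root_.abs_of_nonneg ht.1.le]
    rw [h2, hn] at h
    have : t * ‖deriv p (↑t*z) * z‖ ≤ t * (2 * ‖z‖ / α₁) := by
      calc t * ‖deriv p (↑t*z) * z‖ ≤ 2 * (t * ‖z‖) / α₁ := h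
        _ = t * (2 * ‖z‖ / α₁) := by ring
    exact le_of_mul_le_mul_left this ht.1
  have hpz : ‖p z - 1‖ ≤ 2 * ‖z‖ / α₁ := by
    have := intervalIntegral.norm_integral_le_of_norm_le_const hbd
    rw [hFTC] at this
    simpa using this
  have hz1 : ‖z‖ < 1 := by simpa [hBdef, mem_ball, dist_eq_norm] using hz
  have hhalf : ‖p z - 1‖ ≤ 1/2 := by
    have h1 : 2 * ‖z‖ / α₁ ≤ 2 / α₁ :=
      (div_le_div_iff_of_pos_right h₁).mpr (by nlinarith [norm_nonneg z])
    have h2' : 2 / α₁ ≤ 1/2 := by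
      rw [div_le_div_iff₀ h₁ (by norm_num)]
      linarith
    linarith
  have hlog : ‖Complex.log (1 + (p z - 1))‖ ≤ 3/2 * ‖p z - 1‖ :=
    Complex.norm_log_one_add_half_le_self hhalf
  rw [show (1 : ℂ) + (p z - 1) = p z by ring] at hlog
  calc ‖Complex.log (p z)‖ = ‖Complex.log (p z)‖ := rfl
    _ ≤ 3/2 * ‖p z - 1‖ := hlog
    _ ≤ 3/2 * (1/2) := by linarith
    _ < 1 := by norm_num
end

section
/- Let α₁, α₂ > 0 be real numbers with α₁ − α₂ ≥ e·sinh(1). Let p : ℂ → ℂ be analytic on the open unit disk 𝔻 with p(0) = 1, and suppose there exists an analytic function ω : 𝔻 → ℂ with ω(0) = 0 and |ω(z)| < 1 for all z ∈ 𝔻 such that 1 + α₁·z·p'(z) + α₂·z²·p''(z) = 1 + sin(ω(z)) for all z ∈ 𝔻. Then for every z ∈ 𝔻, |Log(p(z))| < 1. -/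
open Metric Set intervalIntegral

lemma sinh_le_mul (t : ℝ) (h0 : 0 ≤ t) (h1 : t ≤ 1) : Real.sinh t ≤ t * Real.sinh 1 := by
  have h := Real.hasSum_sinh t
  have h2 := (Real.hasSum_sinh 1).mul_left t
  refine hasSum_le (fun n => ?_) h h2
  have ht : t ^ (2*n+1) ≤ t := by
    calc t ^ (2*n+1) ≤ t ^ 1 := pow_le_pow_of_le_one h0 h1 (by omega)
    _ = t := pow_one t
  rw [one_pow, mul_one_div]
  exact div_le_div_of_nonneg_right ht (by positivity) |>.trans_eq rfl

lemma abs_sin_le (w : ℂ) (hw : ‖w‖ ≤ 1) :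
    ‖Complex.sin w‖ ≤ Real.sinh 1 * ‖w‖ := by
  set x := w.re; set y := w.im
  have him : |y| ≤ 1 := (Complex.abs_im_le_norm w).trans hw
  have hsin : Complex.sin w =
      (↑(Real.sin x * Real.cosh y) : ℂ) + (↑(Real.cos x * Real.sinh y) : ℂ) * Complex.I := by
    rw [← Complex.re_add_im w, Complex.sin_add, Complex.sin_mul_I, Complex.cos_mul_I]
    push_cast
    ring
  rw [hsin, Complex.norm_add_mul_I]
  have h1 : Real.sinh 1 ≥ 1 := le_of_lt (by simpa using Real.self_lt_sinh_iff.mpr one_pos)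
  have h2 : |Real.sin x| ≤ |x| := Real.abs_sin_le_abs
  have h3 : |Real.sinh y| ≤ |y| * Real.sinh 1 := by
    rw [Real.abs_sinh]
    exact sinh_le_mul |y| (abs_nonneg y) him
  have hcosh : Real.cosh y ^ 2 = Real.sinh y ^ 2 + 1 := Real.cosh_sq y
  have hsc : Real.sin x ^ 2 + Real.cos x ^ 2 = 1 := Real.sin_sq_add_cos_sq x
  have habs : ‖w‖ = Real.sqrt (x ^ 2 + y ^ 2) := by
    rw [Complex.norm_def, Complex.normSq_apply]; ring_nf; rfl
  rw [habs]
  rw [show Real.sinh 1 * Real.sqrt (x^2+y^2) = Real.sqrt ((Real.sinh 1)^2 * (x^2+y^2)) by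
    rw [Real.sqrt_mul (by positivity), Real.sqrt_sq (by linarith)]]
  apply Real.sqrt_le_sqrt
  have e1 : (Real.sin x * Real.cosh y)^2 + (Real.cos x * Real.sinh y)^2
      = Real.sin x ^ 2 + Real.sinh y ^2 := by nlinarith [Real.sin_sq_add_cos_sq x]
  rw [e1]
  have b1 : Real.sin x ^ 2 ≤ x ^ 2 := by nlinarith [abs_nonneg (Real.sin x), sq_abs (Real.sin x), sq_abs x]
  have b2 : Real.sinh y ^ 2 ≤ (Real.sinh 1)^2 * y ^ 2 := by
    nlinarith [abs_nonneg (Real.sinh y), sq_abs (Real.sinh y), sq_abs y, abs_nonneg y]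
  nlinarith [mul_nonneg (by nlinarith : (0:ℝ) ≤ Real.sinh 1 ^ 2 - 1) (sq_nonneg x)]

lemma key (α₁ α₂ : ℝ) (h₁ : 0 < α₁) (h₂ : 0 < α₂)
    (p : ℂ → ℂ) (hp : DifferentiableOn ℂ p (ball (0:ℂ) 1))
    (s : ℂ → ℂ)
    (hs : ∀ w ∈ ball (0:ℂ) 1,
      α₁ * w * deriv p w + α₂ * w^2 * deriv (deriv p) w = s w)
    (hsb : ∀ w ∈ ball (0:ℂ) 1, ‖s w‖ ≤ Real.sinh 1 * ‖w‖)
    {z : ℂ} (hz : z ∈ ball (0:ℂ) 1) :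
    ‖z * deriv p z‖ ≤ Real.sinh 1 * ‖z‖ / α₁ := by
  set q := deriv p with hq_def
  have hA : AnalyticOnNhd ℂ p (ball (0:ℂ) 1) := hp.analyticOnNhd isOpen_ball
  have hq : DifferentiableOn ℂ q (ball (0:ℂ) 1) := hA.deriv.differentiableOn
  have hq' : DifferentiableOn ℂ (deriv q) (ball (0:ℂ) 1) := hA.deriv.deriv.differentiableOn
  set β := α₁ / α₂ with hβ_def
  have hβ : 0 < β := div_pos h₁ h₂
  set F : ℝ → ℂ := fun r => (↑(r ^ β) : ℂ) * (z * q (↑r * z)) with hF_def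
  set C : ℝ := Real.sinh 1 * ‖z‖ / α₂ with hC_def
  have hCnn : 0 ≤ C := by
    apply div_nonneg _ h₂.le
    have := Real.sinh_pos_iff.mpr one_pos
    positivity
  -- membership of r*z in the ball
  have hmem : ∀ r : ℝ, 0 ≤ r → r ≤ 1 → (↑r * z : ℂ) ∈ ball (0:ℂ) 1 := by
    intro r hr0 hr1
    simp only [mem_ball, dist_zero_right] at hz ⊢
    rw [norm_mul, Complex.norm_real, Real.norm_of_nonneg hr0]
    calc r * ‖z‖ ≤ 1 * ‖z‖ := by
          apply mul_le_mul_of_nonneg_right hr1 (norm_nonneg z)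
      _ = ‖z‖ := one_mul _
      _ < 1 := hz
  -- the derivative of F
  set f' : ℝ → ℂ := fun r =>
    (↑(r ^ (β - 2) / α₂) : ℂ) *
      (↑α₁ * (↑r * z) * q (↑r * z) + ↑α₂ * (↑r * z)^2 * deriv q (↑r * z)) with hf'_def
  have hFd : ∀ r : ℝ, 0 < r → r ≤ 1 → HasDerivAt F (f' r) r := by
    intro r hr0 hr1
    have hrz := hmem r hr0.le hr1
    have d1 : HasDerivAt (fun t : ℝ => t ^ β) (β * r ^ (β - 1)) r :=
      Real.hasDerivAt_rpow_const (Or.inl hr0.ne')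
    have d1' : HasDerivAt (fun t : ℝ => (↑(t ^ β) : ℂ)) (↑(β * r ^ (β - 1)) : ℂ) r :=
      d1.ofReal_comp
    have hqd : HasDerivAt q (deriv q (↑r * z)) (↑r * z) :=
      ((hq.differentiableAt (isOpen_ball.mem_nhds hrz))).hasDerivAt
    have inner : HasDerivAt (fun c : ℂ => c * z) z (↑r : ℂ) := by
      simpa using (hasDerivAt_id (↑r : ℂ)).mul_const z
    have d2 : HasDerivAt (fun t : ℝ => q (↑t * z)) (deriv q (↑r * z) * z) r :=
      by have := (hqd.comp (↑r : ℂ) inner).comp_ofReal; exact this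
    have d3 : HasDerivAt (fun t : ℝ => z * q (↑t * z)) (z * (deriv q (↑r * z) * z)) r :=
      d2.const_mul z
    have := d1'.mul d3
    refine HasDerivAt.congr_deriv this ?_
    -- algebraic identity
    have e1 : r ^ (β - 1) = r ^ (β - 2) * r := by
      rw [show β - 1 = (β - 2) + 1 by ring, Real.rpow_add hr0, Real.rpow_one]
    have e2 : r ^ β = r ^ (β - 2) * (r * r) := by
      rw [show β = (β - 2) + 2 by ring, Real.rpow_add hr0,
        show (2:ℝ) = ((2:ℕ):ℝ) by norm_num, Real.rpow_natCast]
      push_cast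
      ring
    rw [hf'_def]
    rw [e1, e2]; beta_reduce; generalize r ^ (β - 2) = T; rw [hβ_def]; push_cast
    have hα₂ : (α₂ : ℂ) ≠ 0 := Complex.ofReal_ne_zero.mpr h₂.ne'
    field_simp
  -- continuity of f' on compact subintervals of (0,1]
  have hcont : ∀ ε : ℝ, 0 < ε → ContinuousOn f' (Icc ε 1) := by
    intro ε hε
    apply ContinuousOn.mul
    · apply Complex.continuous_ofReal.comp_continuousOn
      apply ContinuousOn.div_const
      intro r hr
      exact (Real.continuousAt_rpow_const r (β - 2)
        (Or.inl (ne_of_gt (lt_of_lt_of_le hε hr.1)))).continuousWithinAt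
    · have hmap : MapsTo (fun r : ℝ => (↑r * z : ℂ)) (Icc ε 1) (ball (0:ℂ) 1) := by
        intro r hr
        exact hmem r (le_trans hε.le hr.1) hr.2
      have hrz : ContinuousOn (fun r : ℝ => (↑r * z : ℂ)) (Icc ε 1) :=
        (Complex.continuous_ofReal.mul continuous_const).continuousOn
      apply ContinuousOn.add
      · exact (continuous_const.continuousOn.mul hrz).mul
          ((hq.continuousOn.comp hrz hmap))
      · exact (continuous_const.continuousOn.mul (hrz.pow 2)).mul
          ((hq'.continuousOn.comp hrz hmap))
  -- the pointwise bound on f'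
  have hf'bound : ∀ r : ℝ, 0 < r → r ≤ 1 →
      ‖f' r‖ ≤ C * r ^ (β - 1) := by
    intro r hr0 hr1
    have hrz := hmem r hr0.le hr1
    have heq : ↑α₁ * (↑r * z) * q (↑r * z) + ↑α₂ * (↑r * z)^2 * deriv q (↑r * z)
        = s (↑r * z) := hs _ hrz
    rw [hf'_def]
    simp only [heq]
    rw [norm_mul, Complex.norm_real]
    have h1 : ‖r ^ (β - 2) / α₂‖ = r ^ (β - 2) / α₂ := by
      rw [Real.norm_of_nonneg (div_nonneg (Real.rpow_nonneg hr0.le _) h₂.le)]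
    rw [h1]
    have h2 : ‖s (↑r * z)‖ ≤ Real.sinh 1 * (r * ‖z‖) := by
      have := hsb _ hrz
      rw [show ‖s (↑r * z)‖ = ‖s (↑r * z)‖ from rfl]
      calc ‖s (↑r * z)‖ ≤ Real.sinh 1 * ‖↑r * z‖ := this
        _ = Real.sinh 1 * (r * ‖z‖) := by
            rw [norm_mul, Complex.norm_real, Real.norm_of_nonneg hr0.le]
    calc r ^ (β - 2) / α₂ * ‖s (↑r * z)‖
        ≤ r ^ (β - 2) / α₂ * (Real.sinh 1 * (r * ‖z‖)) := by
          apply mul_le_mul_of_nonneg_left h2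
          exact div_nonneg (Real.rpow_nonneg hr0.le _) h₂.le
      _ = C * (r ^ (β - 2) * r) := by rw [hC_def]; ring
      _ = C * r ^ (β - 1) := by
          rw [show β - 1 = (β - 2) + 1 by ring, Real.rpow_add hr0, Real.rpow_one]
  -- FTC on [ε, 1] for ε ∈ (0,1)
  have hFTC : ∀ ε : ℝ, 0 < ε → ε < 1 → ‖F 1‖ ≤ ‖F ε‖ + C / β := by
    intro ε hε0 hε1
    have huIcc : uIcc ε 1 = Icc ε 1 := uIcc_of_le hε1.le
    have hint : IntervalIntegrable f' MeasureTheory.volume ε 1 := by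
      apply ContinuousOn.intervalIntegrable
      rw [huIcc]; exact hcont ε hε0
    have heq : ∫ r in ε..1, f' r = F 1 - F ε := by
      apply intervalIntegral.integral_eq_sub_of_hasDerivAt
      · intro r hr
        rw [huIcc] at hr
        exact hFd r (lt_of_lt_of_le hε0 hr.1) hr.2
      · exact hint
    have hbound : ‖∫ r in ε..1, f' r‖ ≤ |∫ r in ε..1, C * r ^ (β - 1)| := by
      apply intervalIntegral.norm_integral_le_abs_of_norm_le
      · filter_upwards [MeasureTheory.ae_restrict_mem measurableSet_uIoc] with t ht
        rw [uIoc_of_le hε1.le] at ht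
        exact hf'bound t (lt_trans hε0 ht.1) ht.2
      · apply ContinuousOn.intervalIntegrable
        apply ContinuousOn.mul continuousOn_const
        intro r hr
        rw [huIcc] at hr
        exact (Real.continuousAt_rpow_const r (β - 1)
          (Or.inl (ne_of_gt (lt_of_lt_of_le hε0 hr.1)))).continuousWithinAt
    have hval : (∫ r in ε..1, C * r ^ (β - 1)) = C * ((1 - ε ^ β) / β) := by
      rw [intervalIntegral.integral_const_mul]
      rw [integral_rpow (Or.inl (by linarith))]
      rw [show β - 1 + 1 = β by ring]
      rw [Real.one_rpow]
    have hεβ0 : 0 ≤ ε ^ β := Real.rpow_nonneg hε0.le β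
    have hεβ1 : ε ^ β ≤ 1 := Real.rpow_le_one hε0.le hε1.le hβ.le
    have hle : |C * ((1 - ε ^ β) / β)| ≤ C / β := by
      rw [abs_of_nonneg (mul_nonneg hCnn (div_nonneg (by linarith) hβ.le))]
      rw [← mul_one_div C β]
      gcongr
      linarith
    calc ‖F 1‖ = ‖F ε + (F 1 - F ε)‖ := by ring_nf
      _ ≤ ‖F ε‖ + ‖F 1 - F ε‖ := norm_add_le _ _
      _ ≤ ‖F ε‖ + C / β := by
          apply add_le_add_right
          rw [← heq]
          refine hbound.trans ?_
          rw [hval]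
          exact hle
  -- F ε → 0 as ε → 0⁺
  have hlim : Filter.Tendsto F (nhdsWithin 0 (Ioi 0)) (nhds 0) := by
    have h0 : (0:ℂ) ∈ ball (0:ℂ) 1 := by simp
    have hcq : ContinuousAt q 0 :=
      (hq.differentiableAt (isOpen_ball.mem_nhds h0)).continuousAt
    have t1 : Filter.Tendsto (fun ε : ℝ => (↑(ε ^ β) : ℂ)) (nhdsWithin 0 (Ioi 0)) (nhds 0) := by
      have hc : ContinuousAt (fun ε : ℝ => ε ^ β) 0 :=
        Real.continuousAt_rpow_const 0 β (Or.inr hβ.le)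
      have h2 : Filter.Tendsto (fun ε : ℝ => ε ^ β) (nhdsWithin 0 (Ioi 0)) (nhds ((0:ℝ) ^ β)) :=
        (hc.continuousWithinAt (s := Ioi 0)).tendsto
      rw [Real.zero_rpow hβ.ne'] at h2
      simpa [Function.comp_def] using (Complex.continuous_ofReal.tendsto 0).comp h2
    have t2 : Filter.Tendsto (fun ε : ℝ => z * q (↑ε * z)) (nhdsWithin 0 (Ioi 0))
        (nhds (z * q 0)) := by
      have hin : ContinuousAt (fun x : ℝ => (↑x * z : ℂ)) 0 :=
        (Complex.continuous_ofReal.mul continuous_const).continuousAt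
      have hcomp : ContinuousAt (fun x : ℝ => q (↑x * z)) 0 := by
        have h := ContinuousAt.comp (x := (0:ℝ)) (g := q) (f := fun x : ℝ => (↑x * z : ℂ))
          (by simpa using hcq) hin
        simpa [Function.comp_def] using h
      have hmul : ContinuousAt (fun x : ℝ => z * q (↑x * z)) 0 :=
        continuousAt_const.mul hcomp
      have h2 := (hmul.continuousWithinAt (s := Ioi 0)).tendsto
      simpa using h2
    have := t1.mul t2
    rw [zero_mul] at this
    exact this
  -- conclude
  have hnorm : ‖F 1‖ ≤ C / β := by
    have hev : ∀ᶠ ε in nhdsWithin 0 (Ioi 0), ‖F 1‖ - C / β ≤ ‖F ε‖ := by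
      have hIoo : Ioo (0:ℝ) 1 ∈ nhdsWithin 0 (Ioi 0) :=
        Ioo_mem_nhdsGT_of_mem ⟨le_refl 0, zero_lt_one⟩
      filter_upwards [hIoo] with ε hε
      have := hFTC ε hε.1 hε.2
      linarith
    have hnormlim : Filter.Tendsto (fun ε => ‖F ε‖) (nhdsWithin 0 (Ioi 0)) (nhds 0) := by
      simpa using hlim.norm
    have : ‖F 1‖ - C / β ≤ 0 := ge_of_tendsto hnormlim hev
    linarith
  have hF1 : F 1 = z * q z := by
    rw [hF_def]
    simp [Real.one_rpow]
  have hCβ : C / β = Real.sinh 1 * ‖z‖ / α₁ := by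
    rw [hC_def, hβ_def]
    field_simp
  rw [← hCβ, ← hF1]
  exact hnorm

theorem subordination_sine (α₁ α₂ : ℝ) (h₁ : 0 < α₁) (h₂ : 0 < α₂)
    (hcond : α₁ - α₂ ≥ Real.exp 1 * Real.sinh 1)
    (p : ℂ → ℂ) (hp : DifferentiableOn ℂ p (Metric.ball (0:ℂ) 1)) (hp0 : p 0 = 1)
    (hsub : ∃ ω : ℂ → ℂ, DifferentiableOn ℂ ω (Metric.ball (0:ℂ) 1) ∧ ω 0 = 0 ∧
      (∀ z ∈ Metric.ball (0:ℂ) 1, ‖ω z‖ < 1) ∧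
      ∀ z ∈ Metric.ball (0:ℂ) 1,
        1 + α₁ * z * deriv p z + α₂ * z^2 * deriv (deriv p) z = 1 + Complex.sin (ω z)) :
    ∀ z ∈ Metric.ball (0:ℂ) 1, ‖Complex.log (p z)‖ < 1 := by
  obtain ⟨ω, hω, hω0, hωlt, heqn⟩ := hsub
  have hsinh : 0 < Real.sinh 1 := Real.sinh_pos_iff.mpr one_pos
  -- basic facts
  set s : ℂ → ℂ := fun w => Complex.sin (ω w) with hs_def
  have hs : ∀ w ∈ ball (0:ℂ) 1,
      ↑α₁ * w * deriv p w + ↑α₂ * w^2 * deriv (deriv p) w = s w := by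
    intro w hw
    have := heqn w hw
    rw [hs_def]
    linear_combination this
  have hschwarz : ∀ w ∈ ball (0:ℂ) 1, ‖ω w‖ ≤ ‖w‖ := by
    intro w hw
    have hmaps : MapsTo ω (ball (0:ℂ) 1) (ball (0:ℂ) 1) := by
      intro x hx
      simpa [mem_ball, dist_zero_right] using hωlt x hx
    have := Complex.dist_le_dist_of_mapsTo_ball_self hω
      (by rw [hω0]; exact hmaps.mono_right ball_subset_closedBall) hw
    simpa [dist_zero_right, hω0] using this
  have hsb : ∀ w ∈ ball (0:ℂ) 1, ‖s w‖ ≤ Real.sinh 1 * ‖w‖ := by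
    intro w hw
    calc ‖s w‖ ≤ Real.sinh 1 * ‖ω w‖ :=
          abs_sin_le (ω w) (hωlt w hw).le
      _ ≤ Real.sinh 1 * ‖w‖ :=
          mul_le_mul_of_nonneg_left (hschwarz w hw) hsinh.le
  have hkey : ∀ w ∈ ball (0:ℂ) 1,
      ‖w * deriv p w‖ ≤ Real.sinh 1 * ‖w‖ / α₁ :=
    fun w hw => key α₁ α₂ h₁ h₂ p hp s hs hsb hw
  -- main estimate
  intro z hz
  have hzlt : ‖z‖ < 1 := by simpa [mem_ball, dist_zero_right] using hz
  have hmem : ∀ t : ℝ, 0 ≤ t → t ≤ 1 → (↑t * z : ℂ) ∈ ball (0:ℂ) 1 := by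
    intro t ht0 ht1
    simp only [mem_ball, dist_zero_right]
    rw [norm_mul, Complex.norm_real, Real.norm_of_nonneg ht0]
    calc t * ‖z‖ ≤ 1 * ‖z‖ := mul_le_mul_of_nonneg_right ht1 (norm_nonneg z)
      _ = ‖z‖ := one_mul _
      _ < 1 := hzlt
  have hA : AnalyticOnNhd ℂ p (ball (0:ℂ) 1) := hp.analyticOnNhd isOpen_ball
  have hq : DifferentiableOn ℂ (deriv p) (ball (0:ℂ) 1) := hA.deriv.differentiableOn
  -- FTC : p z - 1 = ∫ t in 0..1, deriv p (t z) * z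
  have hHd : ∀ t ∈ uIcc (0:ℝ) 1,
      HasDerivAt (fun t : ℝ => p (↑t * z)) (deriv p (↑t * z) * z) t := by
    intro t ht
    rw [uIcc_of_le zero_le_one] at ht
    have htz := hmem t ht.1 ht.2
    have hpd : HasDerivAt p (deriv p (↑t * z)) (↑t * z) :=
      (hp.differentiableAt (isOpen_ball.mem_nhds htz)).hasDerivAt
    have inner : HasDerivAt (fun c : ℂ => c * z) z (↑t : ℂ) := by
      simpa using (hasDerivAt_id (↑t : ℂ)).mul_const z
    have := (hpd.comp (↑t : ℂ) inner).comp_ofReal; exact this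
  have hconts : ContinuousOn (fun t : ℝ => deriv p (↑t * z) * z) (Icc (0:ℝ) 1) := by
    have hmap : MapsTo (fun t : ℝ => (↑t * z : ℂ)) (Icc (0:ℝ) 1) (ball (0:ℂ) 1) :=
      fun t ht => hmem t ht.1 ht.2
    have hc : ContinuousOn (fun t : ℝ => (↑t * z : ℂ)) (Icc (0:ℝ) 1) :=
      (Complex.continuous_ofReal.mul continuous_const).continuousOn
    exact (hq.continuousOn.comp hc hmap).mul continuousOn_const
  have hint : IntervalIntegrable (fun t : ℝ => deriv p (↑t * z) * z)
      MeasureTheory.volume 0 1 := by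
    apply ContinuousOn.intervalIntegrable
    rwa [uIcc_of_le zero_le_one]
  have hFTC : (∫ t in (0:ℝ)..1, deriv p (↑t * z) * z) = p z - 1 := by
    rw [intervalIntegral.integral_eq_sub_of_hasDerivAt hHd hint]
    norm_num [hp0]
  have hboundpt : ∀ t ∈ Set.uIoc (0:ℝ) 1,
      ‖deriv p (↑t * z) * z‖ ≤ Real.sinh 1 * ‖z‖ / α₁ := by
    intro t ht
    rw [uIoc_of_le zero_le_one] at ht
    obtain ⟨ht0, ht1⟩ := ht
    have htz := hmem t ht0.le ht1
    have hk := hkey _ htz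
    have habs : ‖(↑t * z) * deriv p (↑t * z)‖
        = t * ‖deriv p (↑t * z) * z‖ := by
      rw [show (↑t * z) * deriv p (↑t * z) = ↑t * (deriv p (↑t * z) * z) by ring]
      rw [norm_mul, Complex.norm_real, Real.norm_of_nonneg ht0.le]
    have habsz : ‖↑t * z‖ = t * ‖z‖ := by
      rw [norm_mul, Complex.norm_real, Real.norm_of_nonneg ht0.le]
    rw [habs, habsz] at hk
    have := hk
    rw [div_eq_mul_inv] at this ⊢
    nlinarith [norm_nonneg (deriv p (↑t * z) * z), norm_nonneg z,
      inv_nonneg.mpr h₁.le]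
  have hest : ‖p z - 1‖ ≤ Real.sinh 1 * ‖z‖ / α₁ := by
    rw [← hFTC]
    have := intervalIntegral.norm_integral_le_of_norm_le_const hboundpt
    simpa using this
  -- numeric conclusion
  have he : (2.7182818283 : ℝ) < Real.exp 1 := Real.exp_one_gt_d9
  have hα₁ : Real.exp 1 * Real.sinh 1 < α₁ := by nlinarith
  have habsz : 0 ≤ ‖z‖ := norm_nonneg z
  have hd : ‖p z - 1‖ < 1 / Real.exp 1 := by
    have h1 : Real.sinh 1 * ‖z‖ / α₁ < Real.sinh 1 / α₁ := by
      apply (div_lt_div_iff_of_pos_right h₁).mpr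
      nlinarith
    have h2 : Real.sinh 1 / α₁ ≤ 1 / Real.exp 1 := by
      rw [div_le_div_iff₀ h₁ (Real.exp_pos 1)]
      nlinarith [Real.exp_pos 1]
    linarith [hest]
  have hepos : (0:ℝ) < Real.exp 1 := Real.exp_pos 1
  have hinve : 1 / Real.exp 1 < 1/2 := by
    rw [div_lt_div_iff₀ hepos (by norm_num)]
    nlinarith
  have hhalf : ‖p z - 1‖ ≤ 1/2 := by
    rw [show ‖p z - 1‖ = ‖p z - 1‖ from rfl]
    linarith
  have hlog := Complex.norm_log_one_add_half_le_self hhalf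
  rw [show (1:ℂ) + (p z - 1) = p z by ring] at hlog
  have hfin : ‖Complex.log (p z)‖ ≤ 3/2 * ‖p z - 1‖ := hlog
  have : (3:ℝ)/2 * ‖p z - 1‖ < 1 := by
    nlinarith [mul_pos hepos hepos]
  linarith
end

section
/- Let α₁, α₂ > 0 be real numbers with 2(α₁ − α₂) ≥ π·e. Let p : ℂ → ℂ be analytic on the open unit disk 𝔻 with p(0) = 1, and suppose there exists an analytic function ω : 𝔻 → ℂ with ω(0) = 0 and |ω(z)| < 1 for all z ∈ 𝔻 such that 1 + α₁·z·p'(z) + α₂·z²·p''(z) = 1 + Log(ω(z) + (1 + ω(z)²)^{1/2}) for all z ∈ 𝔻, where the square root and Log are the principal branches. Then for every z ∈ 𝔻, |Log(p(z))| < 1. -/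
open Complex Metric Real

set_option maxHeartbeats 1000000 in
lemma aux_pt (w : ℂ) (hw : ‖w‖ < 1) :
    ‖Complex.log (w + (1 + w^2) ^ (1/2:ℂ))‖ < Real.sqrt (2 + Real.pi^2/4) := by
  set ζ : ℂ := 1 + w^2 with hζdef
  have habsw2 : ‖w^2‖ < 1 := by
    rw [norm_pow]; exact pow_lt_one₀ (norm_nonneg w) hw (by norm_num)
  have hζre : 0 < ζ.re := by
    have : |(w^2).re| ≤ ‖w^2‖ := Complex.abs_re_le_norm _
    simp only [hζdef, Complex.add_re, Complex.one_re]
    have := abs_le.mp this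
    linarith
  have hζ0 : ζ ≠ 0 := fun h => by simp [h] at hζre
  set s : ℂ := ζ ^ (1/2:ℂ) with hsdef
  have hs2 : s * s = ζ := by
    rw [hsdef, ← Complex.cpow_add _ _ hζ0]
    norm_num
  have habs_s : ‖s‖ = (‖ζ‖) ^ (1/2:ℝ) := by
    rw [hsdef, show ((1/2:ℂ)) = ((1/2:ℝ):ℂ) by norm_num, Complex.norm_cpow_real]
  have habsζ : ‖ζ‖ ≤ 2 := by
    calc ‖ζ‖ ≤ ‖1‖ + ‖w^2‖ := norm_add_le _ _
    _ ≤ 2 := by rw [norm_one]; linarith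
  have hs_le : ‖s‖ ≤ Real.sqrt 2 := by
    rw [habs_s, Real.sqrt_eq_rpow]
    exact Real.rpow_le_rpow (norm_nonneg _) habsζ (by norm_num)
  -- real part of s is nonnegative
  have hs_re_nonneg : 0 ≤ s.re := by
    rw [hsdef, Complex.cpow_def_of_ne_zero hζ0, Complex.exp_re]
    apply mul_nonneg (Real.exp_nonneg _)
    have him : (Complex.log ζ * (1/2)).im = ζ.arg / 2 := by
      simp [Complex.mul_im, Complex.log_im]
      ring
    rw [him]
    apply Real.cos_nonneg_of_mem_Icc
    constructor
    · linarith [Complex.neg_pi_lt_arg ζ, Real.pi_pos]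
    · linarith [Complex.arg_le_pi ζ]
  have hsre_sq : s.re ^ 2 = ζ.re + s.im ^ 2 := by
    have := congrArg Complex.re hs2
    simp only [Complex.mul_re] at this
    nlinarith [this]
  have hwre : w.re ^ 2 ≤ ζ.re := by
    have h1 : ζ.re = 1 + w.re^2 - w.im^2 := by
      rw [hζdef]
      simp only [Complex.add_re, Complex.one_re, sq, Complex.mul_re]
      ring
    have h2 : |w.im| ≤ ‖w‖ := Complex.abs_im_le_norm w
    have h3 : |w.im| < 1 := lt_of_le_of_lt h2 hw
    have him2 : w.im ^ 2 < 1 := by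
      rw [← _root_.sq_abs]; nlinarith [abs_nonneg w.im]
    linarith
  have hre_xi : 0 ≤ (w + s).re := by
    rw [Complex.add_re]
    nlinarith [hs_re_nonneg, hsre_sq, hwre, sq_nonneg s.im]
  set ξ : ℂ := w + s with hξdef
  have harg : |ξ.arg| ≤ π/2 := Complex.abs_arg_le_pi_div_two_iff.mpr hre_xi
  have hξub : ‖ξ‖ < 1 + Real.sqrt 2 :=
    lt_of_le_of_lt (norm_add_le w s) (by linarith)
  have hprod : ξ * (s - w) = 1 := by
    rw [hξdef]; linear_combination hs2 + hζdef
  have hξ0 : ξ ≠ 0 := by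
    intro h; rw [h, zero_mul] at hprod; exact one_ne_zero hprod.symm
  have habsprod : ‖ξ‖ = (‖s - w‖)⁻¹ :=
    eq_inv_of_mul_eq_one_left (by rw [← norm_mul, hprod, norm_one])
  have hswpos : 0 < ‖s - w‖ := by
    rw [norm_pos_iff]
    intro h; rw [h, mul_zero] at hprod; exact one_ne_zero hprod.symm
  have hsw : ‖s - w‖ < 1 + Real.sqrt 2 := by
    calc ‖s - w‖ ≤ ‖s‖ + ‖w‖ := by
          simpa [sub_eq_add_neg] using norm_add_le s (-w)
    _ < 1 + Real.sqrt 2 := by linarith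
  have hξlb : (1 + Real.sqrt 2)⁻¹ < ‖ξ‖ := by
    rw [habsprod]
    exact inv_strictAnti₀ hswpos hsw
  have hξpos : 0 < ‖ξ‖ := norm_pos_iff.mpr hξ0
  have hloglt : |Real.log (‖ξ‖)| < Real.log (1 + Real.sqrt 2) := by
    rw [abs_lt]
    constructor
    · have := Real.log_lt_log (by positivity) hξlb
      rwa [Real.log_inv] at this
    · exact Real.log_lt_log hξpos hξub
  have hlog2 : Real.log (1 + Real.sqrt 2) < Real.sqrt 2 := by
    have h1 : Real.log (1 + Real.sqrt 2) < (1 + Real.sqrt 2) - 1 :=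
      Real.log_lt_sub_one_of_pos (by positivity)
        (by nlinarith [Real.sq_sqrt (by norm_num : (0:ℝ) ≤ 2), Real.sqrt_nonneg 2])
    linarith
  have hformula : ‖Complex.log ξ‖ =
      Real.sqrt ((Real.log (‖ξ‖))^2 + (ξ.arg)^2) := by
    rw [Complex.norm_def, Complex.normSq_apply, Complex.log_re, Complex.log_im]
    ring_nf
  clear_value ζ s ξ
  rw [hformula]
  have hs2' : (0:ℝ) ≤ 2 := by norm_num
  have h5 : (Real.log (‖ξ‖))^2 < 2 := by
    nlinarith [_root_.sq_abs (Real.log (‖ξ‖)),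
      abs_nonneg (Real.log (‖ξ‖)), Real.sq_sqrt hs2', Real.sqrt_nonneg 2]
  have h6 : ξ.arg^2 ≤ (π/2)^2 := by
    rcases abs_le.mp harg with ⟨hl, hr⟩
    nlinarith [Real.pi_pos]
  apply Real.sqrt_lt_sqrt (by positivity)
  have h7 : (π/2)^2 = π^2/4 := by ring
  linarith only [h5, h6, h7]

lemma aux_num : 4 * Real.sqrt (2 + Real.pi^2/4) < Real.pi * Real.exp 1 := by
  have hπl : 3.141592 < π := Real.pi_gt_d6
  have hπu : π < 3.15 := Real.pi_lt_d2
  have he : 2.7182818 < Real.exp 1 := by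
    have := Real.exp_one_gt_d9; linarith
  have h1 : Real.sqrt (2 + π^2/4) < 2.12 := by
    rw [show (2.12:ℝ) = Real.sqrt (2.12^2) from (Real.sqrt_sq (by norm_num)).symm]
    apply Real.sqrt_lt_sqrt (by positivity)
    nlinarith
  nlinarith [Real.pi_pos]

open Complex Metric Real Set Filter Topology

lemma aux_deriv_bound (α₁ α₂ Mb : ℝ) (h₁ : 0 < α₁) (h₂ : 0 < α₂) (hαα : α₂ < α₁)
    (hMb : 0 ≤ Mb) (p : ℂ → ℂ) (hpA : AnalyticOnNhd ℂ p (Metric.ball (0:ℂ) 1))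
    (hgb : ∀ w ∈ Metric.ball (0:ℂ) 1,
      ‖α₁ * w * deriv p w + α₂ * w^2 * deriv (deriv p) w‖ ≤ Mb * ‖w‖) :
    ∀ z ∈ Metric.ball (0:ℂ) 1, ‖deriv p z‖ ≤ Mb / α₁ := by
  have hp'A : AnalyticOnNhd ℂ (deriv p) (Metric.ball (0:ℂ) 1) := hpA.deriv
  set g : ℂ → ℂ := fun w => α₁ * w * deriv p w + α₂ * w^2 * deriv (deriv p) w with hgdef
  set u : ℂ → ℂ := fun w => w * deriv p w with hudef
  set β : ℝ := (α₁ - α₂)/α₂ with hβdef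
  have hβ : 0 < β := div_pos (by linarith) h₂
  have hβ1 : α₂ * (β + 1) = α₁ := by
    rw [hβdef]
    field_simp
    ring
  have huD : ∀ w ∈ Metric.ball (0:ℂ) 1,
      HasDerivAt u (deriv p w + w * deriv (deriv p) w) w := by
    intro w hw
    have h3 : HasDerivAt (deriv p) (deriv (deriv p) w) w :=
      (hp'A w hw).differentiableAt.hasDerivAt
    have := (hasDerivAt_id w).mul h3
    exact this.congr_deriv (by simp)
  have hODE : ∀ w ∈ Metric.ball (0:ℂ) 1,
      (α₁ - α₂) * u w + α₂ * (w * (deriv p w + w * deriv (deriv p) w)) = g w := by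
    intro w hw
    simp only [hudef, hgdef]
    ring
  have hucont : ContinuousOn u (Metric.ball (0:ℂ) 1) :=
    fun w hw => ((huD w hw).continuousAt).continuousWithinAt
  have hg0 : g 0 = 0 := by simp [hgdef]
  -- main bound on u
  have hu : ∀ z ∈ Metric.ball (0:ℂ) 1, ‖u z‖ ≤ Mb * ‖z‖ / α₁ := by
    intro z hz
    have hzlt : ‖z‖ < 1 := by simpa [Complex.dist_eq] using hz
    have hmem : ∀ s : ℝ, 0 ≤ s → s ≤ 1 → ((s:ℂ) * z) ∈ Metric.ball (0:ℂ) 1 := by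
      intro s h0 h1'
      simp only [Metric.mem_ball, Complex.dist_eq, sub_zero, norm_mul, Complex.norm_real, Real.norm_eq_abs]
      calc |s| * ‖z‖ ≤ 1 * ‖z‖ := by
            apply mul_le_mul_of_nonneg_right _ (norm_nonneg z)
            rw [_root_.abs_of_nonneg h0]; exact h1'
      _ < 1 := by rwa [one_mul]
    set C : ℝ := Mb * ‖z‖ / α₂ with hCdef
    have hC : 0 ≤ C := by positivity
    set φ : ℝ → ℂ := fun s => ((s ^ β : ℝ) : ℂ) * u ((s:ℂ) * z) with hφdef
    set f' : ℝ → ℂ := fun s => (((s ^ (β-1) : ℝ) : ℂ) / (α₂:ℂ)) * g ((s:ℂ) * z) with hf'def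
    set B : ℝ → ℝ := fun s => C * s ^ (β+1) / (β+1) with hBdef
    set B' : ℝ → ℝ := fun s => C * s ^ β with hB'def
    -- continuity of φ
    have hrpow_cont : Continuous fun s : ℝ => ((s ^ β : ℝ) : ℂ) :=
      Complex.continuous_ofReal.comp
        (continuous_iff_continuousAt.mpr fun s => Real.continuousAt_rpow_const s β (Or.inr hβ.le))
    have hinner_cont : Continuous fun s : ℝ => (s:ℂ) * z :=
      Complex.continuous_ofReal.mul continuous_const
    have hφcont : ContinuousOn φ (Icc (0:ℝ) 1) := by
      apply (hrpow_cont.continuousOn).mul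
      apply hucont.comp hinner_cont.continuousOn
      intro s hs
      exact hmem s hs.1 hs.2
    have hφ0 : ‖φ 0‖ ≤ B 0 := by
      simp [hφdef, hBdef, Real.zero_rpow hβ.ne', Real.zero_rpow (by positivity : β+1 ≠ 0)]
    have hB : ∀ s, HasDerivAt B (B' s) s := by
      intro s
      have h3 := ((Real.hasDerivAt_rpow_const (x := s) (p := β+1)
        (Or.inr (by linarith))).const_mul C).div_const (β+1)
      refine h3.congr_deriv ?_
      simp only [hB'def]
      have hβ1' : β + 1 ≠ 0 := by linarith
      field_simp
      ring
    have hbound : ∀ s ∈ Ico (0:ℝ) 1, ‖f' s‖ ≤ B' s := by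
      intro s hs
      rcases eq_or_lt_of_le hs.1 with h0 | h0
      · simp [hf'def, hB'def, ← h0, hg0, Real.zero_rpow hβ.ne']
      · have hsz := hmem s hs.1 hs.2.le
        have h4 : ‖f' s‖ = s ^ (β-1) / α₂ * ‖g ((s:ℂ)*z)‖ := by
          simp only [hf'def]
          rw [norm_mul, norm_div]
          simp [Complex.norm_real, Real.norm_eq_abs,
            _root_.abs_of_nonneg (Real.rpow_nonneg hs.1 (β-1)), _root_.abs_of_pos h₂]
        rw [h4]
        simp only [hB'def]
        have h5 : ‖g ((s:ℂ)*z)‖ ≤ Mb * (s * ‖z‖) := by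
          have := hgb _ hsz
          simpa [Complex.norm_real, Real.norm_eq_abs, abs_of_pos h0] using this
        have h6 : s ^ (β-1) * s = s ^ β := by
          have := Real.rpow_add h0 (β-1) 1
          rw [Real.rpow_one, show β - 1 + 1 = β by ring] at this
          exact this.symm
        calc s ^ (β-1) / α₂ * ‖g ((s:ℂ)*z)‖
            ≤ s ^ (β-1) / α₂ * (Mb * (s * ‖z‖)) := by
              apply mul_le_mul_of_nonneg_left h5 (by positivity)
        _ = C * (s ^ (β-1) * s) := by rw [hCdef]; field_simp
        _ = C * s ^ β := by rw [h6]
    have hφ' : ∀ s ∈ Ico (0:ℝ) 1, HasDerivWithinAt φ (f' s) (Ici s) s := by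
      intro s hs
      rcases eq_or_lt_of_le hs.1 with h0 | h0
      · -- s = 0
        have hf'0 : f' s = 0 := by simp [hf'def, ← h0, hg0]
        rw [hf'0, ← h0]
        rw [hasDerivWithinAt_iff_tendsto_slope]
        rw [Set.Ici_sdiff_left]
        have hφzero : φ 0 = 0 := by simp [hφdef, hudef]
        have heq : ∀ᶠ t in 𝓝[Ioi (0:ℝ)] 0, slope φ 0 t
            = ((t ^ β : ℝ) : ℂ) * (z * deriv p ((t:ℂ)*z)) := by
          filter_upwards [self_mem_nhdsWithin] with t ht
          have ht0 : (0:ℝ) < t := ht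
          have htne : (t:ℂ) ≠ 0 := by exact_mod_cast ht0.ne'
          rw [slope_def_module, hφzero, sub_zero, sub_zero]
          simp only [hφdef, hudef, Complex.real_smul]
          push_cast
          field_simp
        have hlim : Tendsto (fun t : ℝ => ((t ^ β : ℝ) : ℂ) * (z * deriv p ((t:ℂ)*z)))
            (𝓝[Ioi (0:ℝ)] 0) (𝓝 0) := by
          have l1 : Tendsto (fun t : ℝ => ((t ^ β : ℝ) : ℂ)) (𝓝[Ioi (0:ℝ)] 0)
              (𝓝 0) := by
            have := (Real.continuousAt_rpow_const 0 β (Or.inr hβ.le)).continuousWithinAt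
              (s := Ioi (0:ℝ))
            have h00 : (0:ℝ) ^ β = 0 := Real.zero_rpow hβ.ne'
            have := Complex.continuous_ofReal.continuousAt.tendsto.comp this
            simpa [h00, Function.comp_def] using this
          have l2 : Tendsto (fun t : ℝ => z * deriv p ((t:ℂ)*z)) (𝓝[Ioi (0:ℝ)] 0)
              (𝓝 (z * deriv p 0)) := by
            have hcd : ContinuousAt (deriv p) 0 :=
              (hp'A 0 (by simp)).continuousAt
            have hi : Tendsto (fun t : ℝ => (t:ℂ)*z) (𝓝[Ioi (0:ℝ)] 0) (𝓝 0) := by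
              have := (hinner_cont.tendsto 0).mono_left
                (nhdsWithin_le_nhds (s := Ioi (0:ℝ)))
              simpa using this
            exact tendsto_const_nhds.mul (hcd.tendsto.comp hi)
          have := l1.mul l2
          simpa using this
        exact (hlim.congr' (by filter_upwards [heq] with t ht using ht.symm))
      · -- s > 0
        apply HasDerivAt.hasDerivWithinAt
        have hsz := hmem s hs.1 hs.2.le
        have hr : HasDerivAt (fun t:ℝ => ((t ^ β : ℝ) : ℂ)) ((β * s^(β-1) :ℝ):ℂ) s :=
          (Real.hasDerivAt_rpow_const (Or.inl h0.ne')).ofReal_comp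
        have houter : HasDerivAt u
            (deriv p ((s:ℂ)*z) + ((s:ℂ)*z) * deriv (deriv p) ((s:ℂ)*z)) ((s:ℂ)*z) :=
          huD _ hsz
        have hinner : HasDerivAt (fun ζ:ℂ => ζ * z) z (s:ℂ) := hasDerivAt_mul_const z
        have hcomp : HasDerivAt (fun t:ℝ => u ((t:ℂ)*z))
            ((deriv p ((s:ℂ)*z) + ((s:ℂ)*z) * deriv (deriv p) ((s:ℂ)*z)) * z) s :=
          by have := (houter.comp (s:ℂ) hinner).comp_ofReal; exact this
        have hφD := hr.mul hcomp
        refine hφD.congr_deriv ?_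
        have hODEs := hODE _ hsz
        have h6 : (s:ℝ) ^ (β-1) * s = s ^ β := by
          have := Real.rpow_add h0 (β-1) 1
          rw [Real.rpow_one, show β - 1 + 1 = β by ring] at this
          exact this.symm
        have hβc : (β:ℂ) = ((α₁:ℂ) - α₂)/α₂ := by
          rw [hβdef]; push_cast; ring
        have hα₂c : (α₂:ℂ) ≠ 0 := Complex.ofReal_ne_zero.mpr h₂.ne'
        have c1 : ((β * s^(β-1) : ℝ):ℂ) = ((s^(β-1):ℝ):ℂ)/α₂ * ((α₁:ℂ) - α₂) := by
          rw [Complex.ofReal_mul, hβc]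
          field_simp
        have c2 : ((s^β : ℝ):ℂ) = ((s^(β-1):ℝ):ℂ)/α₂ * ((α₂:ℂ) * (s:ℂ)) := by
          rw [← h6]
          push_cast
          field_simp
        simp only [hf'def]
        rw [← hODEs, c1, c2]
        ring
      -- end
    have hfin := image_norm_le_of_norm_deriv_right_le_deriv_boundary
      hφcont hφ' hφ0 hB hbound (right_mem_Icc.mpr zero_le_one)
    have hφ1 : φ 1 = u z := by simp [hφdef]
    rw [hφ1] at hfin
    have hB1 : B 1 = Mb * ‖z‖ / α₁ := by
      simp only [hBdef, Real.one_rpow, mul_one, hCdef]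
      rw [← hβ1]
      field_simp
    rw [hB1] at hfin
    exact hfin
  have hnz : ∀ w ∈ Metric.ball (0:ℂ) 1, w ≠ 0 → ‖deriv p w‖ ≤ Mb / α₁ := by
    intro w hw hw0
    have h7 := hu w hw
    have hwpos : 0 < ‖w‖ := norm_pos_iff.mpr hw0
    simp only [hudef, norm_mul] at h7
    rw [← mul_le_mul_iff_right₀ hwpos]
    refine le_trans h7 (le_of_eq ?_)
    ring
  intro z hz
  by_cases hz0 : z = 0
  · subst hz0
    have hev : ∀ᶠ w in 𝓝[≠] (0:ℂ), ‖deriv p w‖ ≤ Mb/α₁ := by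
      have hball : Metric.ball (0:ℂ) 1 ∈ 𝓝 (0:ℂ) := Metric.ball_mem_nhds _ one_pos
      filter_upwards [self_mem_nhdsWithin, mem_nhdsWithin_of_mem_nhds hball] with w hw1 hw2
      exact hnz w hw2 hw1
    have hcont : Tendsto (fun w => ‖deriv p w‖) (𝓝[≠] (0:ℂ))
        (𝓝 (‖deriv p 0‖)) := by
      have h8 : ContinuousAt (deriv p) 0 := (hp'A 0 (by simp)).continuousAt
      exact (continuous_norm.continuousAt.comp h8).continuousWithinAt
    exact le_of_tendsto hcont hev
  · exact hnz z hz hz0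

theorem subordination_arcsinh (α₁ α₂ : ℝ) (h₁ : 0 < α₁) (h₂ : 0 < α₂)
    (hcond : 2 * (α₁ - α₂) ≥ Real.pi * Real.exp 1)
    (p : ℂ → ℂ) (hp : DifferentiableOn ℂ p (Metric.ball (0:ℂ) 1)) (hp0 : p 0 = 1)
    (hsub : ∃ ω : ℂ → ℂ, DifferentiableOn ℂ ω (Metric.ball (0:ℂ) 1) ∧ ω 0 = 0 ∧
      (∀ z ∈ Metric.ball (0:ℂ) 1, ‖ω z‖ < 1) ∧
      ∀ z ∈ Metric.ball (0:ℂ) 1,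
        1 + α₁ * z * deriv p z + α₂ * z^2 * deriv (deriv p) z =
          1 + Complex.log (ω z + (1 + (ω z)^2) ^ (1/2 : ℂ))) :
    ∀ z ∈ Metric.ball (0:ℂ) 1, ‖Complex.log (p z)‖ < 1 := by
  obtain ⟨ω, hωd, hω0, hωlt, heq⟩ := hsub
  set Mb : ℝ := Real.sqrt (2 + Real.pi^2/4) with hMbdef
  have hMbpos : 0 < Mb := Real.sqrt_pos.mpr (by positivity)
  have hπe : 0 < Real.pi * Real.exp 1 := mul_pos Real.pi_pos (Real.exp_pos 1)
  have hαα : α₂ < α₁ := by linarith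
  have h9 := aux_num
  rw [← hMbdef] at h9
  have hα1 : 2 * Mb < α₁ := by linarith
  have hpA : AnalyticOnNhd ℂ p (Metric.ball (0:ℂ) 1) := hp.analyticOnNhd isOpen_ball
  have hgval : ∀ z ∈ Metric.ball (0:ℂ) 1,
      (α₁:ℂ) * z * deriv p z + (α₂:ℂ) * z^2 * deriv (deriv p) z
        = Complex.log (ω z + (1 + (ω z)^2) ^ (1/2:ℂ)) := by
    intro z hz
    linear_combination heq z hz
  have hgb : ∀ w ∈ Metric.ball (0:ℂ) 1,
      ‖(α₁:ℂ) * w * deriv p w + (α₂:ℂ) * w^2 * deriv (deriv p) w‖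
        ≤ Mb * ‖w‖ := by
    set G : ℂ → ℂ := fun w => (α₁:ℂ) * w * deriv p w + (α₂:ℂ) * w^2 * deriv (deriv p) w
      with hGdef
    have h1d : DifferentiableOn ℂ (deriv p) (Metric.ball (0:ℂ) 1) :=
      hpA.deriv.differentiableOn
    have h2d : DifferentiableOn ℂ (deriv (deriv p)) (Metric.ball (0:ℂ) 1) :=
      hpA.deriv.deriv.differentiableOn
    have hGdiff : DifferentiableOn ℂ G (Metric.ball (0:ℂ) 1) := by
      apply DifferentiableOn.add
      · exact ((differentiableOn_const _).mul differentiableOn_id).mul h1d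
      · exact ((differentiableOn_const _).mul (differentiableOn_id.pow 2)).mul h2d
    have hG0 : G 0 = 0 := by simp [hGdef]
    have hmaps : Set.MapsTo G (Metric.ball (0:ℂ) 1) (Metric.ball (G 0) Mb) := by
      rw [hG0]
      intro w hw
      rw [Metric.mem_ball, Complex.dist_eq, sub_zero, hGdef]
      simp only
      rw [hgval w hw, hMbdef]
      exact aux_pt (ω w) (hωlt w hw)
    intro w hw
    have h10 := Complex.dist_le_div_mul_dist_of_mapsTo_ball hGdiff (hmaps.mono_right Metric.ball_subset_closedBall) hw
    rw [hG0] at h10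
    simpa [Complex.dist_eq, div_one] using h10
  have hp'b := aux_deriv_bound α₁ α₂ Mb h₁ h₂ hαα hMbpos.le p hpA hgb
  intro z hz
  have hzlt : ‖z‖ < 1 := by simpa [Complex.dist_eq] using hz
  have hmem : ∀ s : ℝ, 0 ≤ s → s ≤ 1 → ((s:ℂ) * z) ∈ Metric.ball (0:ℂ) 1 := by
    intro s h0 h1'
    simp only [Metric.mem_ball, Complex.dist_eq, sub_zero, norm_mul, Complex.norm_real, Real.norm_eq_abs]
    calc |s| * ‖z‖ ≤ 1 * ‖z‖ := by
          apply mul_le_mul_of_nonneg_right _ (norm_nonneg z)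
          rw [_root_.abs_of_nonneg h0]; exact h1'
    _ < 1 := by rwa [one_mul]
  have hbd : ‖p z - 1‖ ≤ Mb / α₁ * ‖z‖ := by
    set ρ : ℝ → ℂ := fun s => p ((s:ℂ)*z) with hρdef
    have hρ' : ∀ s ∈ Set.Ico (0:ℝ) 1,
        HasDerivWithinAt ρ (deriv p ((s:ℂ)*z) * z) (Set.Ici s) s := by
      intro s hs
      have houter : HasDerivAt p (deriv p ((s:ℂ)*z)) ((s:ℂ)*z) :=
        (hpA _ (hmem s hs.1 hs.2.le)).differentiableAt.hasDerivAt
      have hinner : HasDerivAt (fun ζ:ℂ => ζ * z) z (s:ℂ) := hasDerivAt_mul_const z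
      exact ((houter.comp (s:ℂ) hinner).comp_ofReal).hasDerivWithinAt
    have hρc : ContinuousOn ρ (Set.Icc 0 1) := by
      apply hp.continuousOn.comp (Complex.continuous_ofReal.mul continuous_const).continuousOn
      intro s hs
      exact hmem s hs.1 hs.2
    have hbound : ∀ s ∈ Set.Ico (0:ℝ) 1,
        ‖deriv p ((s:ℂ)*z) * z‖ ≤ Mb / α₁ * ‖z‖ := by
      intro s hs
      rw [norm_mul]
      apply mul_le_mul_of_nonneg_right _ (norm_nonneg z)
      exact hp'b _ (hmem s hs.1 hs.2.le)
    have h11 := norm_image_sub_le_of_norm_deriv_right_le_segment hρc hρ' hbound 1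
      (Set.right_mem_Icc.mpr zero_le_one)
    simp only [hρdef, Complex.ofReal_one, one_mul, Complex.ofReal_zero, zero_mul, hp0,
      mul_one, sub_zero] at h11
    simpa using h11
  have hhalf : ‖p z - 1‖ < 1/2 := by
    have h12 : Mb / α₁ * ‖z‖ ≤ Mb / α₁ * 1 := by
      apply mul_le_mul_of_nonneg_left hzlt.le (by positivity)
    have h13 : Mb / α₁ < 1/2 := by
      rw [div_lt_iff₀ h₁]
      linarith
    calc ‖p z - 1‖ ≤ Mb / α₁ * ‖z‖ := hbd
    _ ≤ Mb / α₁ * 1 := h12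
    _ < 1/2 := by rwa [mul_one]
  have h14 := Complex.norm_log_one_add_half_le_self (z := p z - 1)
    (by exact hhalf.le)
  rw [add_sub_cancel] at h14
  calc ‖Complex.log (p z)‖ ≤ 3/2 * ‖p z - 1‖ := h14
  _ < 3/2 * (1/2) := by linarith
  _ < 1 := by norm_num
end

section
/- Let α₁, α₂ > 0 be real numbers with α₁ − α₂ ≥ e². Let p : ℂ → ℂ be analytic on the open unit disk 𝔻 with p(0) = 1, and suppose there exists an analytic function ω : 𝔻 → ℂ with ω(0) = 0 and |ω(z)| < 1 for all z ∈ 𝔻 such that 1 + α₁·z·p'(z) + α₂·z²·p''(z) = 1 + ω(z)·e^{ω(z)} for all z ∈ 𝔻. Then for every z ∈ 𝔻, |Log(p(z))| < 1. -/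
open Metric Set intervalIntegral Real

set_option maxHeartbeats 1600000 in
theorem subordination_cardioid (α₁ α₂ : ℝ) (h₁ : 0 < α₁) (h₂ : 0 < α₂)
    (hcond : α₁ - α₂ ≥ (Real.exp 1)^2)
    (p : ℂ → ℂ) (hp : DifferentiableOn ℂ p (Metric.ball (0:ℂ) 1)) (hp0 : p 0 = 1)
    (hsub : ∃ ω : ℂ → ℂ, DifferentiableOn ℂ ω (Metric.ball (0:ℂ) 1) ∧ ω 0 = 0 ∧
      (∀ z ∈ Metric.ball (0:ℂ) 1, ‖ω z‖ < 1) ∧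
      ∀ z ∈ Metric.ball (0:ℂ) 1,
        1 + α₁ * z * deriv p z + α₂ * z^2 * deriv (deriv p) z =
          1 + ω z * Complex.exp (ω z)) :
    ∀ z ∈ Metric.ball (0:ℂ) 1, ‖Complex.log (p z)‖ < 1 := by
  obtain ⟨ω, hω, hω0, hωlt, heq⟩ := hsub
  have hB : IsOpen (Metric.ball (0:ℂ) 1) := Metric.isOpen_ball
  have hpa : AnalyticOnNhd ℂ p (Metric.ball (0:ℂ) 1) := hp.analyticOnNhd hB
  have hp'a : AnalyticOnNhd ℂ (deriv p) (Metric.ball (0:ℂ) 1) := hpa.deriv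
  have hp''a : AnalyticOnNhd ℂ (deriv (deriv p)) (Metric.ball (0:ℂ) 1) := hp'a.deriv
  have he1 : (1:ℝ) < Real.exp 1 := by
    have := Real.exp_one_gt_d9; linarith
  have hα₁ : Real.exp 1 ^ 2 < α₁ := by nlinarith [Real.exp_pos 1]
  -- Schwarz lemma
  have hSch : ∀ w ∈ Metric.ball (0:ℂ) 1, ‖ω w‖ ≤ ‖w‖ := by
    intro w hw
    exact Complex.norm_le_norm_of_mapsTo_ball hω
      (fun x hx => mem_closedBall_zero_iff.2 (hωlt x hx).le) hω0 (mem_ball_zero_iff.1 hw)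
  -- bound on h(w) := α₁ w p'(w) + α₂ w² p''(w)
  have hmod : ∀ w ∈ Metric.ball (0:ℂ) 1,
      ‖(α₁:ℂ) * w * deriv p w + α₂ * w^2 * deriv (deriv p) w‖
        ≤ ‖w‖ * Real.exp ‖w‖ := by
    intro w hw
    have hEq : (α₁:ℂ) * w * deriv p w + α₂ * w^2 * deriv (deriv p) w
        = ω w * Complex.exp (ω w) := by linear_combination heq w hw
    rw [hEq, norm_mul, Complex.norm_exp]
    have h1 : ‖ω w‖ ≤ ‖w‖ := hSch w hw
    have h2 : (ω w).re ≤ ‖w‖ := le_trans (Complex.re_le_norm _) h1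
    exact mul_le_mul h1 (Real.exp_le_exp.2 h2) (Real.exp_pos _).le (norm_nonneg _)
  -- the key estimate: α₁ |z p'(z)| ≤ |z| e^{|z|}
  set k : ℝ := (α₁ - α₂) / α₂ with hk_def
  have hk : 0 < k := div_pos (by nlinarith [Real.exp_pos 1]) h₂
  have hα₂c : (α₂:ℂ) ≠ 0 := by exact_mod_cast h₂.ne'
  have hk1 : k + 1 = α₁ / α₂ := by rw [hk_def]; field_simp; ring
  have key : ∀ z ∈ Metric.ball (0:ℂ) 1, ‖z * deriv p z‖
      ≤ ‖z‖ * Real.exp ‖z‖ / α₁ := by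
    intro z hz
    set r : ℝ := ‖z‖ with hr_def
    have hr0 : 0 ≤ r := norm_nonneg z
    have hr1 : r < 1 := by rw [hr_def]; exact mem_ball_zero_iff.1 hz
    have hmem : ∀ s : ℝ, s ∈ Set.Icc (0:ℝ) 1 → (s:ℂ) * z ∈ Metric.ball (0:ℂ) 1 := by
      intro s hs
      rw [mem_ball_zero_iff, norm_mul, Complex.norm_real, Real.norm_eq_abs,
        abs_of_nonneg hs.1, ← hr_def]
      nlinarith [hs.2]
    set G : ℂ → ℂ := fun c => c * z * deriv p (c * z) with hG_def
    set φ : ℝ → ℂ := fun s => (((s:ℝ) ^ k : ℝ) : ℂ) *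
      ((α₁ * z * deriv p ((s:ℂ)*z) + α₂ * (s:ℂ) * z^2 * deriv (deriv p) ((s:ℂ)*z)) / α₂)
      with hφ_def
    set g : ℝ → ℂ := fun s => ((s ^ k : ℝ) : ℂ) * G (s:ℂ) with hg_def
    have hGd : ∀ s ∈ Set.Ioo (0:ℝ) 1, HasDerivAt g (φ s) s := by
      intro s hs
      have hsz : (s:ℂ) * z ∈ Metric.ball (0:ℂ) 1 := hmem s ⟨hs.1.le, hs.2.le⟩
      have hd1 : HasDerivAt (fun c : ℂ => c * z) z (s:ℂ) := by
        simpa using (hasDerivAt_id (s:ℂ)).mul_const z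
      have hd2 : HasDerivAt (deriv p) (deriv (deriv p) ((s:ℂ)*z)) ((s:ℂ)*z) :=
        (hp'a _ hsz).differentiableAt.hasDerivAt
      have hd3 : HasDerivAt (fun c : ℂ => deriv p (c*z))
          (deriv (deriv p) ((s:ℂ)*z) * z) (s:ℂ) := by
        have := HasDerivAt.comp (x := (s:ℂ)) hd2 hd1
        exact this
      have hd4 : HasDerivAt G
          (z * deriv p ((s:ℂ)*z) + ((s:ℂ)*z) * (deriv (deriv p) ((s:ℂ)*z) * z)) (s:ℂ) :=
        hd1.mul hd3
      have hd5 : HasDerivAt (fun t : ℝ => G (t:ℂ))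
          (z * deriv p ((s:ℂ)*z) + ((s:ℂ)*z) * (deriv (deriv p) ((s:ℂ)*z) * z)) s :=
        hd4.comp_ofReal
      have hd6 : HasDerivAt (fun t : ℝ => ((t ^ k : ℝ) : ℂ)) ((k * s^(k-1) : ℝ) : ℂ) s :=
        (Real.hasDerivAt_rpow_const (Or.inl hs.1.ne')).ofReal_comp
      have hd7 := hd6.mul hd5
      have hsk : (s:ℝ)^(k-1) * s = s^k := by
        rw [← Real.rpow_add_one hs.1.ne']; ring_nf
      convert hd7 using 1
      case e'_4 => rfl
      case e'_8 => rfl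
      have hca : ((s^k : ℝ) : ℂ) = ((s^(k-1):ℝ):ℂ) * (s:ℂ) := by
        rw [← hsk]; push_cast; ring
      have hkc : (k:ℂ) * α₂ = α₁ - α₂ := by
        rw [hk_def]; push_cast; exact div_mul_cancel₀ _ hα₂c
      simp only [hφ_def, hG_def]
      rw [hca]
      push_cast
      field_simp
      linear_combination (-(((s ^ (k-1) : ℝ) : ℂ) * (s:ℂ) * z * deriv p ((s:ℂ)*z))) * hkc
    have hcs : Continuous (fun s : ℝ => (s:ℂ)*z) := Complex.continuous_ofReal.mul continuous_const
    have hc1 : ContinuousOn (fun s : ℝ => deriv p ((s:ℂ)*z)) (Set.Icc 0 1) :=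
      hp'a.continuousOn.comp hcs.continuousOn hmem
    have hc2 : ContinuousOn (fun s : ℝ => deriv (deriv p) ((s:ℂ)*z)) (Set.Icc 0 1) :=
      hp''a.continuousOn.comp hcs.continuousOn hmem
    have hcrpow : Continuous (fun s : ℝ => ((s ^ k : ℝ) : ℂ)) :=
      Complex.continuous_ofReal.comp (Real.continuous_rpow_const hk.le)
    have hφcont : ContinuousOn φ (Set.Icc 0 1) := by
      simp only [hφ_def]
      exact hcrpow.continuousOn.mul
        (((continuousOn_const.mul hc1).add
          ((((continuous_const.mul Complex.continuous_ofReal).mul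
            continuous_const).continuousOn).mul hc2)).div_const _)
    have hgcont : ContinuousOn g (Set.Icc 0 1) := by
      simp only [hg_def, hG_def]
      exact hcrpow.continuousOn.mul (hcs.continuousOn.mul hc1)
    have hint : IntervalIntegrable φ MeasureTheory.volume 0 1 :=
      hφcont.intervalIntegrable_of_Icc zero_le_one
    have hFTC : ∫ s in (0:ℝ)..1, φ s = g 1 - g 0 :=
      intervalIntegral.integral_eq_sub_of_hasDeriv_right_of_le zero_le_one hgcont
        (fun s hs => (hGd s hs).hasDerivWithinAt) hint
    have g1 : g 1 = z * deriv p z := by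
      simp [hg_def, hG_def, Real.one_rpow]
    have g0 : g 0 = 0 := by
      simp [hg_def, hG_def, Real.zero_rpow hk.ne']
    have hv : z * deriv p z = ∫ s in (0:ℝ)..1, φ s := by rw [hFTC, g1, g0, sub_zero]
    set C : ℝ := r * Real.exp r with hC_def
    have hC0 : 0 ≤ C := mul_nonneg hr0 (Real.exp_pos _).le
    have hbound : ∀ s ∈ Set.Ioc (0:ℝ) 1, ‖φ s‖ ≤ s ^ k * C / α₂ := by
      intro s hs
      have hs0 : 0 < s := hs.1
      have hsz : (s:ℂ) * z ∈ Metric.ball (0:ℂ) 1 := hmem s ⟨hs0.le, hs.2⟩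
      have habs : ‖(s:ℂ)*z‖ = s * r := by
        rw [norm_mul, Complex.norm_real, Real.norm_eq_abs, abs_of_pos hs0, hr_def]
      have h1 := hmod _ hsz
      rw [habs] at h1
      have hI : (s:ℂ) * (α₁ * z * deriv p ((s:ℂ)*z) + α₂ * (s:ℂ) * z^2 * deriv (deriv p) ((s:ℂ)*z))
          = α₁ * ((s:ℂ)*z) * deriv p ((s:ℂ)*z) + α₂ * ((s:ℂ)*z)^2 * deriv (deriv p) ((s:ℂ)*z) := by
        push_cast; ring
      have hIabs : s * ‖(α₁:ℂ) * z * deriv p ((s:ℂ)*z) + α₂ * (s:ℂ) * z^2 * deriv (deriv p) ((s:ℂ)*z)‖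
          ≤ s * r * Real.exp (s * r) := by
        calc s * ‖(α₁:ℂ) * z * deriv p ((s:ℂ)*z) + α₂ * (s:ℂ) * z^2 * deriv (deriv p) ((s:ℂ)*z)‖
            = ‖(s:ℂ) * ((α₁:ℂ) * z * deriv p ((s:ℂ)*z) + α₂ * (s:ℂ) * z^2 * deriv (deriv p) ((s:ℂ)*z))‖ := by
              rw [norm_mul, Complex.norm_real, Real.norm_eq_abs, abs_of_pos hs0]
          _ ≤ s * r * Real.exp (s * r) := by rw [hI]; exact h1
      have hI2 : ‖(α₁:ℂ) * z * deriv p ((s:ℂ)*z) + α₂ * (s:ℂ) * z^2 * deriv (deriv p) ((s:ℂ)*z)‖ ≤ C := by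
        have h3 : s * r * Real.exp (s * r) ≤ s * C := by
          rw [hC_def]
          have h5 : Real.exp (s * r) ≤ Real.exp r := Real.exp_le_exp.2 (by nlinarith [hs.2])
          have h6 := mul_le_mul_of_nonneg_left h5 (mul_nonneg hs0.le hr0)
          nlinarith
        have := hIabs.trans h3
        exact le_of_mul_le_mul_left (by linarith) hs0
      simp only [hφ_def]
      rw [norm_mul, norm_div, Complex.norm_real, Real.norm_eq_abs,
        abs_of_nonneg (Real.rpow_nonneg hs0.le k)]
      have hαabs : ‖(α₂:ℂ)‖ = α₂ := by
        rw [Complex.norm_real, Real.norm_eq_abs, abs_of_pos h₂]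
      rw [hαabs, mul_div_assoc]
      exact mul_le_mul_of_nonneg_left ((div_le_div_iff_of_pos_right h₂).2 hI2)
        (Real.rpow_nonneg hs0.le k)
    have hae : ∀ᵐ t ∂(MeasureTheory.volume.restrict (Set.uIoc (0:ℝ) 1)),
        ‖φ t‖ ≤ t ^ k * C / α₂ := by
      rw [Set.uIoc_of_le zero_le_one]
      exact (MeasureTheory.ae_restrict_mem measurableSet_Ioc).mono hbound
    have hgbint : IntervalIntegrable (fun s : ℝ => s ^ k * C / α₂) MeasureTheory.volume 0 1 :=
      (((Real.continuous_rpow_const hk.le).mul continuous_const).div_const _).intervalIntegrable 0 1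
    have hval : ∫ s in (0:ℝ)..1, s ^ k * C / α₂ = 1/(k+1) * (C / α₂) := by
      simp_rw [mul_div_assoc]
      rw [intervalIntegral.integral_mul_const, integral_rpow (Or.inl (by linarith : (-1:ℝ) < k))]
      rw [Real.one_rpow, Real.zero_rpow (by linarith : k + 1 ≠ 0)]
      ring
    have hfinal : ‖z * deriv p z‖ ≤ 1/(k+1) * (C / α₂) := by
      rw [hv]
      have hk1pos : (0:ℝ) < k + 1 := by linarith
      have h7 := intervalIntegral.norm_integral_le_of_norm_le (f := φ) zero_le_one
        ((MeasureTheory.ae_restrict_iff' measurableSet_Ioc).1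
          (by rw [← Set.uIoc_of_le zero_le_one]; exact hae)) hgbint
      rw [hval] at h7
      exact h7
    calc ‖z * deriv p z‖ ≤ 1/(k+1) * (C / α₂) := hfinal
      _ = r * Real.exp r / α₁ := by
          rw [hk1, hC_def]
          field_simp
  -- Step D: p z - 1 = ∫_0^1 deriv p (s z) * z ds, and conclusion
  intro z hz
  have hr1 : ‖z‖ < 1 := by exact mem_ball_zero_iff.1 hz
  have hr0 : 0 ≤ ‖z‖ := norm_nonneg z
  set r : ℝ := ‖z‖ with hr_def
  have hmem : ∀ s : ℝ, s ∈ Set.Icc (0:ℝ) 1 → (s:ℂ) * z ∈ Metric.ball (0:ℂ) 1 := by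
    intro s hs
    rw [mem_ball_zero_iff, norm_mul, Complex.norm_real, Real.norm_eq_abs,
      abs_of_nonneg hs.1, ← hr_def]
    nlinarith [hs.2]
  have hPd : ∀ s ∈ Set.uIcc (0:ℝ) 1,
      HasDerivAt (fun t : ℝ => p ((t:ℂ)*z)) (deriv p ((s:ℂ)*z) * z) s := by
    intro s hs
    rw [Set.uIcc_of_le zero_le_one] at hs
    have hsz := hmem s hs
    have hd1 : HasDerivAt (fun c : ℂ => c * z) z (s:ℂ) := by
      simpa using (hasDerivAt_id (s:ℂ)).mul_const z
    have hd2 : HasDerivAt p (deriv p ((s:ℂ)*z)) ((s:ℂ)*z) :=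
      (hpa _ hsz).differentiableAt.hasDerivAt
    have hd3 : HasDerivAt (fun c : ℂ => p (c*z)) (deriv p ((s:ℂ)*z) * z) (s:ℂ) := by
      have := HasDerivAt.comp (x := (s:ℂ)) hd2 hd1
      exact this
    exact hd3.comp_ofReal
  have hcs : Continuous (fun s : ℝ => (s:ℂ)*z) := Complex.continuous_ofReal.mul continuous_const
  have hc1 : ContinuousOn (fun s : ℝ => deriv p ((s:ℂ)*z) * z) (Set.Icc 0 1) :=
    (hp'a.continuousOn.comp hcs.continuousOn hmem).mul continuousOn_const
  have hint : IntervalIntegrable (fun s : ℝ => deriv p ((s:ℂ)*z) * z) MeasureTheory.volume 0 1 :=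
    hc1.intervalIntegrable_of_Icc zero_le_one
  have hFTC := intervalIntegral.integral_eq_sub_of_hasDerivAt hPd hint
  have hPz : p z - 1 = ∫ s in (0:ℝ)..1, deriv p ((s:ℂ)*z) * z := by
    rw [hFTC]
    norm_num [hp0]
  have hbound : ∀ s ∈ Set.uIoc (0:ℝ) 1, ‖deriv p ((s:ℂ)*z) * z‖ ≤ r * Real.exp r / α₁ := by
    rw [Set.uIoc_of_le zero_le_one]
    intro s hs
    have hs0 : 0 < s := hs.1
    have hsz := hmem s ⟨hs0.le, hs.2⟩
    have hkey := key _ hsz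
    have habs : ‖(s:ℂ)*z‖ = s * r := by
      rw [norm_mul, Complex.norm_real, Real.norm_eq_abs, abs_of_pos hs0, hr_def]
    rw [habs] at hkey
    have h2 : ‖(s:ℂ)*z * deriv p ((s:ℂ)*z)‖ = s * ‖deriv p ((s:ℂ)*z) * z‖ := by
      rw [norm_mul, habs, norm_mul, ← hr_def]
      ring
    rw [h2] at hkey
    have h3 : s * r * Real.exp (s*r) / α₁ ≤ s * (r * Real.exp r / α₁) := by
      have h5 : Real.exp (s * r) ≤ Real.exp r := Real.exp_le_exp.2 (by nlinarith [hs.2])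
      have h6 := mul_le_mul_of_nonneg_left h5 (mul_nonneg hs0.le hr0)
      have h7 : s * r * Real.exp (s*r) ≤ s * (r * Real.exp r) := by nlinarith
      calc s * r * Real.exp (s*r) / α₁ ≤ s * (r * Real.exp r) / α₁ :=
            (div_le_div_iff_of_pos_right h₁).2 h7
        _ = s * (r * Real.exp r / α₁) := by ring
    have := hkey.trans h3
    exact le_of_mul_le_mul_left this hs0
  have hPb : ‖p z - 1‖ ≤ r * Real.exp r / α₁ := by
    rw [hPz]
    have := intervalIntegral.norm_integral_le_of_norm_le_const hbound
    simpa using this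
  have hE := Real.exp_one_gt_d9
  have hEpos := Real.exp_pos 1
  have hb2 : r * Real.exp r ≤ Real.exp 1 := by
    have := Real.exp_le_exp.2 hr1.le
    nlinarith
  have hPb2 : ‖p z - 1‖ ≤ Real.exp 1 / α₁ :=
    hPb.trans ((div_le_div_iff_of_pos_right h₁).2 hb2)
  have hhalf : ‖p z - 1‖ ≤ 1/2 := by
    refine hPb2.trans ?_
    rw [div_le_iff₀ h₁]
    nlinarith
  have hlog : ‖Complex.log (p z)‖ ≤ 3/2 * ‖p z - 1‖ := by
    have h10 := Complex.norm_log_one_add_half_le_self (z := p z - 1) hhalf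
    simpa using h10
  calc ‖Complex.log (p z)‖ ≤ 3/2 * ‖p z - 1‖ := hlog
    _ ≤ 3/2 * (Real.exp 1 / α₁) := by linarith [hPb2]
    _ < 1 := by
        have h11 : (3:ℝ)/2 * (Real.exp 1/α₁) = (3/2 * Real.exp 1)/α₁ := by ring
        rw [h11, div_lt_one h₁]
        nlinarith
end
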